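/- arXiv:2212.08518 — 3 statements merged into one kernel-verified Lean document; each statement's English description precedes it below -/
import Mathlib

section
/- Let β < 0 and G(x) = αx with α ≥ 0. Then for every N ≥ 1, every control strategy φ ∈ Φ_N, and every solution of the controlled particle system, the expected number of particles surviving forever satisfies E[S^{φ,N}_∞] < −2/β, where S^{φ,N}_∞ := #{1 ≤ i ≤ N : τ^{φ,N}_i = ∞}. In particular sup_{φ∈Φ_N} E[S^{φ,N}_∞] < −2/β for all N ≥ 1. -/
open MeasureTheory ProbabilityTheory Filter Set
open scoped ENNReal NNReal Classical
open scoped Topology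

noncomputable section

/-- The first hitting time of `(-∞, 0]` by the path `x` after time `0`,
with value `∞` if the path never hits `(-∞, 0]`. -/
def hitTime (x : ℝ → ℝ) : ℝ≥0∞ :=
  ⨅ s ∈ {s : ℝ | 0 ≤ s ∧ x s ≤ 0}, ENNReal.ofReal s

/-- Membership in the set `𝕄` of càdlàg non-decreasing functions `ℓ : [-1, ∞) → ℝ`
(encoded as functions on `ℝ`) which vanish on `[-1, 0)` and satisfy `lim_{t → ∞} ℓ t ≤ 1`
(equivalently, `ℓ ≤ 1` everywhere, by monotonicity). -/
structure MemM (ℓ : ℝ → ℝ) : Prop where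
  zero_on_neg : ∀ t : ℝ, -1 ≤ t → t < 0 → ℓ t = 0
  mono : MonotoneOn ℓ (Set.Ici (-1 : ℝ))
  right_cont : ∀ t : ℝ, -1 ≤ t → ContinuousWithinAt ℓ (Set.Ici t) t
  le_one : ∀ t : ℝ, -1 ≤ t → ℓ t ≤ 1

/-- The Lévy distance `d` on `𝕄`. -/
def levyDist (ℓ ℓ' : ℝ → ℝ) : ℝ :=
  sInf {ε : ℝ | 0 < ε ∧ ∀ t : ℝ, 0 ≤ t → ℓ' t ≤ ℓ (t + ε) + ε ∧ ℓ (t - ε) - ε ≤ ℓ' t}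

/-- The path `ℓ` stopped at time `t`. -/
def stopAt (ℓ : ℝ → ℝ) (t : ℝ) : ℝ → ℝ := fun s => ℓ (min t s)

/-- The metric `d̂(ℓ, ℓ') = ∫₀^∞ e^{-s} (d(ℓ_{s∧·}, ℓ'_{s∧·}) ∧ 1) ds` on `𝕄`. -/
def dHat (ℓ ℓ' : ℝ → ℝ) : ℝ :=
  ∫ s in Set.Ioi (0 : ℝ), Real.exp (-s) * min (levyDist (stopAt ℓ s) (stopAt ℓ' s)) 1

/-- A process `B : ℝ → Ω → ℝ` (considered for times `t ≥ 0`) is a standard Brownian motion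
under `P`: it starts at `0`, has a.s. continuous paths, independent increments, and Gaussian
increments `B t - B s ~ N(0, t - s)`. -/
structure IsStandardBM {Ω : Type*} [MeasurableSpace Ω] (P : Measure Ω) (B : ℝ → Ω → ℝ) :
    Prop where
  meas : ∀ t : ℝ, Measurable (B t)
  init : ∀ᵐ ω ∂P, B 0 ω = 0
  cont : ∀ᵐ ω ∂P, ContinuousOn (fun t => B t ω) (Set.Ici (0 : ℝ))
  incr_law : ∀ s t : ℝ, 0 ≤ s → s ≤ t →
    P.map (fun ω => B t ω - B s ω) = gaussianReal 0 (Real.toNNReal (t - s))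
  indep_incr : ∀ (n : ℕ) (τ : Fin (n + 1) → ℝ), Monotone τ → (∀ i, 0 ≤ τ i) →
    iIndepFun (m := fun _ => inferInstance)
      (fun i : Fin n => fun ω => B (τ i.succ) ω - B (τ i.castSucc) ω) P

/-- The filtration generated by the family of Brownian motions `B i`, evaluated at time `t`. -/
def bmFiltration {Ω ι : Type*} [MeasurableSpace Ω] (B : ι → ℝ → Ω → ℝ) (t : ℝ) :
    MeasurableSpace Ω :=
  ⨆ (i : ι) (s : ℝ) (_ : 0 ≤ s) (_ : s ≤ t), MeasurableSpace.comap (B i s) inferInstance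

/-- Set-up of the `N`-particle system: i.i.d. initial conditions `Z i` with common law `θ`
(supported on `[0,∞)`), independent standard Brownian motions `B i`, with the pairs
`(Z i, B i)` mutually independent and `Z i` independent of `B i`. -/
structure ParticleSetup (N : ℕ) {Ω : Type*} [MeasurableSpace Ω] (P : Measure Ω)
    (θ : Measure ℝ) (Z : Fin N → Ω → ℝ) (B : Fin N → ℝ → Ω → ℝ) : Prop where
  isProb : IsProbabilityMeasure P
  z_meas : ∀ i, Measurable (Z i)
  z_law : ∀ i, P.map (Z i) = θ
  z_nonneg : ∀ i, ∀ᵐ ω ∂P, 0 ≤ Z i ω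
  bm : ∀ i, IsStandardBM P (B i)
  indep_pairs : iIndepFun (m := fun _ : Fin N => (inferInstance : MeasurableSpace (ℝ × (ℝ → ℝ))))
    (fun i => fun ω => (Z i ω, fun t => B i t ω)) P
  indep_zb : ∀ i, IndepFun (Z i) (fun ω => (fun t => B i t ω) : Ω → ℝ → ℝ) P

/-- `(X, L)` is a solution of the interacting particle system
`X^i_t = Z^i + β t + B^i_t − G(L_t)`, `L_t = (1/N) ∑_i 1{τ_i ≤ t}`. -/
structure IsParticleSolution (N : ℕ) (β : ℝ) (G : ℝ → ℝ) {Ω : Type*} [MeasurableSpace Ω]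
    (P : Measure Ω) (Z : Fin N → Ω → ℝ) (B : Fin N → ℝ → Ω → ℝ)
    (X : Fin N → ℝ → Ω → ℝ) (L : Ω → ℝ → ℝ) : Prop where
  memM : ∀ᵐ ω ∂P, MemM (L ω)
  adapted : ∀ t : ℝ, 0 ≤ t → Measurable[bmFiltration B t] (fun ω => L ω t)
  eqX : ∀ᵐ ω ∂P, ∀ i, ∀ t : ℝ, 0 ≤ t →
    X i t ω = Z i ω + β * t + B i t ω - G (L ω t)
  eqL : ∀ᵐ ω ∂P, ∀ t : ℝ, 0 ≤ t →
    L ω t = (N : ℝ)⁻¹ *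
      (Finset.univ.filter fun i : Fin N =>
        hitTime (fun s => X i s ω) ≤ ENNReal.ofReal t).card

/-- Set-up for the McKean–Vlasov equation: an initial condition `Z ≥ 0` with law `θ` and an
independent standard Brownian motion `B`. -/
structure MVSetup {Ω : Type*} [MeasurableSpace Ω] (P : Measure Ω) (θ : Measure ℝ)
    (Z : Ω → ℝ) (B : ℝ → Ω → ℝ) : Prop where
  isProb : IsProbabilityMeasure P
  z_meas : Measurable Z
  z_law : P.map Z = θ
  z_nonneg : ∀ᵐ ω ∂P, 0 ≤ Z ω
  bm : IsStandardBM P B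
  indep : IndepFun Z (fun ω => (fun t => B t ω) : Ω → ℝ → ℝ) P

/-- `(X, Λ)` is a solution of the McKean–Vlasov equation
`X_t = Z + β t + B_t − G(Λ_t)`, `Λ_t = P(τ ≤ t)` with `τ = inf{t ≥ 0 : X_t ≤ 0}`. -/
structure IsMVSolution (β : ℝ) (G : ℝ → ℝ) {Ω : Type*} [MeasurableSpace Ω] (P : Measure Ω)
    (Z : Ω → ℝ) (B : ℝ → Ω → ℝ) (X : ℝ → Ω → ℝ) (Λ : ℝ → ℝ) : Prop where
  memM : MemM Λ
  eqX : ∀ᵐ ω ∂P, ∀ t : ℝ, 0 ≤ t → X t ω = Z ω + β * t + B t ω - G (Λ t)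
  eqΛ : ∀ t : ℝ, 0 ≤ t →
    Λ t = (P {ω | hitTime (fun s => X s ω) ≤ ENNReal.ofReal t}).toReal


/-- A strategy: an adapted (progressively measurable) process `φ` with values in `[0,1]^N`
whose coordinates sum to at most `1` (the unit budget). -/
structure IsStrategy (N : ℕ) {Ω : Type*} [MeasurableSpace Ω] (B : Fin N → ℝ → Ω → ℝ)
    (φ : Fin N → ℝ → Ω → ℝ) : Prop where
  adapted : ∀ (i : Fin N) (t : ℝ), 0 ≤ t → Measurable[bmFiltration B t] (φ i t)
  jointly_meas : ∀ i : Fin N, Measurable (Function.uncurry (φ i))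
  mem_Icc : ∀ (i : Fin N) (t : ℝ) (ω : Ω), 0 ≤ t → φ i t ω ∈ Set.Icc (0 : ℝ) 1
  budget : ∀ (t : ℝ) (ω : Ω), 0 ≤ t → ∑ i : Fin N, φ i t ω ≤ 1

/-- `(X, L)` is a solution of the controlled particle system
`X^i_t = Z^i + ∫₀^t (β + φ^i_s) ds + B^i_t − G(L_t)`, `L_t = (1/N) ∑_i 1{τ_i ≤ t}`. -/
structure IsControlledSolution (N : ℕ) (β : ℝ) (G : ℝ → ℝ) {Ω : Type*} [MeasurableSpace Ω]
    (P : Measure Ω) (Z : Fin N → Ω → ℝ) (B : Fin N → ℝ → Ω → ℝ) (φ : Fin N → ℝ → Ω → ℝ)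
    (X : Fin N → ℝ → Ω → ℝ) (L : Ω → ℝ → ℝ) : Prop where
  memM : ∀ᵐ ω ∂P, MemM (L ω)
  adapted : ∀ t : ℝ, 0 ≤ t → Measurable[bmFiltration B t] (fun ω => L ω t)
  eqX : ∀ᵐ ω ∂P, ∀ i : Fin N, ∀ t : ℝ, 0 ≤ t →
    X i t ω = Z i ω + (β * t + ∫ s in Set.Ioc (0 : ℝ) t, φ i s ω) + B i t ω - G (L ω t)
  eqL : ∀ᵐ ω ∂P, ∀ t : ℝ, 0 ≤ t →
    L ω t = (N : ℝ)⁻¹ *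
      (Finset.univ.filter fun i : Fin N =>
        hitTime (fun s => X i s ω) ≤ ENNReal.ofReal t).card

lemma integrable_id_gauss : Integrable (id : ℝ → ℝ) (gaussianReal 0 1) := by
  rw [gaussianReal_of_var_ne_zero 0 one_ne_zero,
    integrable_withDensity_iff (measurable_gaussianPDF 0 1)
      (ae_of_all _ fun x => ENNReal.ofReal_lt_top)]
  have h : (fun x : ℝ => id x * (gaussianPDF 0 1 x).toReal)
      = fun x : ℝ => (Real.sqrt (2 * Real.pi * (1:ℝ≥0)))⁻¹ * (x * Real.exp (-(1/2) * x ^ 2)) := by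
    funext x
    rw [gaussianPDF, ENNReal.toReal_ofReal (gaussianPDFReal_nonneg _ _ _), gaussianPDFReal]
    rw [show (-(x - (0:ℝ)) ^ 2 / (2 * ((1:ℝ≥0):ℝ))) = -(1/2) * x ^ 2 by push_cast; ring]
    simp only [id]; ring
  rw [h]
  exact (integrable_mul_exp_neg_mul_sq (by norm_num : (0:ℝ) < 1/2)).const_mul _

lemma integral_id_gauss : ∫ x, x ∂(gaussianReal 0 1) = 0 := by
  have hmap : (gaussianReal 0 1).map (fun x => (-1:ℝ) * x) = gaussianReal 0 1 := by
    rw [gaussianReal_map_const_mul]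
    norm_num
  have h2 : ∫ x, x ∂((gaussianReal 0 1).map (fun x => (-1:ℝ) * x))
      = ∫ x, (-1) * x ∂(gaussianReal 0 1) :=
    integral_map (by fun_prop) (by rw [hmap]; exact aestronglyMeasurable_id)
  rw [hmap] at h2
  rw [integral_const_mul] at h2
  linarith

lemma bm_lln {Ω : Type*} [MeasurableSpace Ω] {P : Measure Ω} {B : ℝ → Ω → ℝ}
    (hB : IsStandardBM P B) :
    ∀ᵐ ω ∂P, Tendsto (fun n : ℕ => B n ω / n) atTop (𝓝 0) := by
  set Y : ℕ → Ω → ℝ := fun k ω => B (k + 1) ω - B k ω with hY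
  have hmeas : ∀ k, Measurable (Y k) := fun k => (hB.meas _).sub (hB.meas _)
  have hlaw : ∀ k, P.map (Y k) = gaussianReal 0 1 := by
    intro k
    have := hB.incr_law k (k + 1) (Nat.cast_nonneg k) (by linarith)
    rwa [show ((k:ℝ) + 1 - k) = 1 by ring, Real.toNNReal_one] at this
  have hint : Integrable (Y 0) P := by
    have := (integrable_map_measure (f := Y 0) (g := id)
      (by rw [hlaw 0]; exact aestronglyMeasurable_id) (hmeas 0).aemeasurable).mp
      (by rw [hlaw 0]; exact integrable_id_gauss)
    simpa using this
  have hident : ∀ k, IdentDistrib (Y k) (Y 0) P P :=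
    fun k => ⟨(hmeas k).aemeasurable, (hmeas 0).aemeasurable, by rw [hlaw k, hlaw 0]⟩
  have hindep : Pairwise (Function.onFun (IndepFun · · P) Y) := by
    intro j k hjk
    set n := max j k + 1 with hn
    have hj : j < n := lt_of_le_of_lt (le_max_left _ _) (Nat.lt_succ_self _)
    have hk : k < n := lt_of_le_of_lt (le_max_right _ _) (Nat.lt_succ_self _)
    have hτ : Monotone (fun m : Fin (n + 1) => ((m : ℕ) : ℝ)) :=
      fun a b hab => by exact_mod_cast Nat.cast_le.mpr hab
    have hτ0 : ∀ m : Fin (n + 1), (0:ℝ) ≤ ((m : ℕ) : ℝ) := fun m => Nat.cast_nonneg _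
    have hii := hB.indep_incr n (fun m => ((m : ℕ) : ℝ)) hτ hτ0
    have := hii.indepFun (i := ⟨j, hj⟩) (j := ⟨k, hk⟩) (by simp [Fin.ext_iff, hjk])
    simpa [Y, Fin.succ, Fin.castSucc, Fin.castAdd, Fin.castLE, Nat.cast_add] using this
  have hsl := strong_law_ae_real Y hint hindep hident
  have hmean : P[Y 0] = 0 := by
    have h2 : ∫ x, x ∂(P.map (Y 0)) = ∫ ω, Y 0 ω ∂P := by
      have := integral_map (φ := Y 0) (f := id) (hmeas 0).aemeasurable
        (by rw [hlaw 0]; exact aestronglyMeasurable_id)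
      simpa using this
    rw [hlaw 0, integral_id_gauss] at h2
    exact h2.symm
  rw [hmean] at hsl
  filter_upwards [hsl, hB.init] with ω hω h0
  have htel : ∀ n : ℕ, (∑ i ∈ Finset.range n, Y i ω) = B n ω := by
    intro n
    have := Finset.sum_range_sub (f := fun k : ℕ => B k ω) n
    simp only [Y]
    push_cast at this
    rw [this, h0, sub_zero]
  exact Tendsto.congr (fun n => by rw [htel n]) hω

/-- Theorem 2.5 (i): in a negative economy `β < 0`, for any budget-control
strategy and any solution of the controlled particle system, the expected number of particles
surviving forever is less than `-2/β`. -/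
theorem stmt4 (β : ℝ) (hβ : β < 0) (a : ℝ) (ha : 0 ≤ a)
    {Ω : Type*} [MeasurableSpace Ω]
    (N : ℕ) (hN : 1 ≤ N) (P : Measure Ω) (θ : Measure ℝ)
    (Z : Fin N → Ω → ℝ) (B : Fin N → ℝ → Ω → ℝ)
    (hsetup : ParticleSetup N P θ Z B)
    (φ : Fin N → ℝ → Ω → ℝ) (hφ : IsStrategy N B φ)
    (X : Fin N → ℝ → Ω → ℝ) (L : Ω → ℝ → ℝ)
    (hsol : IsControlledSolution N β (fun x => a * x) P Z B φ X L) :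
    ∫ ω, ((Finset.univ.filter fun i : Fin N =>
        hitTime (fun s => X i s ω) = ⊤).card : ℝ) ∂P < -2 / β := by
  classical
  haveI := hsetup.isProb
  set f : Ω → ℝ := fun ω => ((Finset.univ.filter fun i : Fin N =>
      hitTime (fun s => X i s ω) = ⊤).card : ℝ) with hf
  have hβ' : (0:ℝ) < -β := by linarith
  have hpos : (0:ℝ) < -1 / β := by
    rw [div_pos_iff]
    right
    constructor <;> linarith
  have hlt : -1 / β < -2 / β := by
    have h2 : (-2:ℝ) / β = -1 / β + -1 / β := by ring
    linarith
  have hae : ∀ᵐ ω ∂P, f ω ≤ -1 / β := by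
    have hlln : ∀ᵐ ω ∂P, ∀ i : Fin N, Tendsto (fun n : ℕ => B i n ω / n) atTop (𝓝 0) :=
      ae_all_iff.mpr fun i => bm_lln (hsetup.bm i)
    filter_upwards [hsol.eqX, hsol.memM, hlln] with ω hX hM hBl
    set S : Finset (Fin N) := Finset.univ.filter fun i : Fin N =>
      hitTime (fun s => X i s ω) = ⊤ with hS
    show ((S.card : ℝ)) ≤ -1 / β
    rw [le_div_iff_of_neg hβ]
    by_contra hcon
    push_neg at hcon
    -- hcon : (S.card : ℝ) * β < -1
    have hsurv : ∀ i ∈ S, ∀ s : ℝ, 0 ≤ s → 0 < X i s ω := by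
      intro i hi s hs
      by_contra hle
      push_neg at hle
      have hmem := (Finset.mem_filter.mp hi).2
      have hle2 : hitTime (fun u => X i u ω) ≤ ENNReal.ofReal s :=
        iInf₂_le s ⟨hs, hle⟩
      rw [hmem, top_le_iff] at hle2
      exact ENNReal.ofReal_ne_top hle2
    have hL0 : ∀ t : ℝ, 0 ≤ t → 0 ≤ L ω t := by
      intro t ht
      have h0 := hM.zero_on_neg (-1) le_rfl (by norm_num)
      have hmono := hM.mono (show (-1:ℝ) ∈ Set.Ici (-1:ℝ) from Set.mem_Ici.mpr le_rfl)
        (show t ∈ Set.Ici (-1:ℝ) from Set.mem_Ici.mpr (by linarith)) (by linarith)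
      linarith
    have hIint : ∀ (i : Fin N) (t : ℝ), IntegrableOn (fun s => φ i s ω) (Set.Ioc 0 t) volume := by
      intro i t
      have hms : Measurable fun s : ℝ => φ i s ω :=
        (hφ.jointly_meas i).comp (measurable_id.prodMk measurable_const)
      apply Integrable.mono' (integrable_const (1:ℝ)) hms.aestronglyMeasurable
      filter_upwards [ae_restrict_mem measurableSet_Ioc] with s hs
      have hIcc := hφ.mem_Icc i s ω hs.1.le
      rw [Real.norm_eq_abs, abs_le]
      exact ⟨by linarith [hIcc.1], hIcc.2⟩
    have hsum_le : ∀ n : ℕ, ∑ i ∈ S, (∫ s in Set.Ioc (0:ℝ) (n:ℝ), φ i s ω) ≤ (n:ℝ) := by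
      intro n
      calc ∑ i ∈ S, (∫ s in Set.Ioc (0:ℝ) (n:ℝ), φ i s ω)
          ≤ ∑ i ∈ Finset.univ, (∫ s in Set.Ioc (0:ℝ) (n:ℝ), φ i s ω) :=
            Finset.sum_le_sum_of_subset_of_nonneg (Finset.subset_univ S)
              (fun i _ _ => setIntegral_nonneg measurableSet_Ioc
                fun s hs => (hφ.mem_Icc i s ω hs.1.le).1)
        _ = ∫ s in Set.Ioc (0:ℝ) (n:ℝ), ∑ i, φ i s ω :=
            (integral_finset_sum _ fun i _ => hIint i n).symm
        _ ≤ ∫ s in Set.Ioc (0:ℝ) (n:ℝ), (1:ℝ) := by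
            apply setIntegral_mono_on (integrable_finset_sum _ fun i _ => hIint i n)
              (integrableOn_const measure_Ioc_lt_top.ne) measurableSet_Ioc
            intro s hs
            exact hφ.budget s ω hs.1.le
        _ = (n:ℝ) := by
            rw [setIntegral_const, Real.volume_real_Ioc, smul_eq_mul, mul_one, sub_zero,
              max_eq_left (Nat.cast_nonneg n)]
    have hkeyn : ∀ n : ℕ, -((S.card : ℝ) * β * n) - n ≤ ∑ i ∈ S, (Z i ω + B i n ω) := by
      intro n
      have hn0 : (0:ℝ) ≤ (n:ℝ) := Nat.cast_nonneg n
      have h1 : ∀ i ∈ S,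
          a * L ω n - (∫ s in Set.Ioc (0:ℝ) (n:ℝ), φ i s ω) - β * n ≤ Z i ω + B i n ω := by
        intro i hi
        have hx := hX i n hn0
        have hp := hsurv i hi n hn0
        rw [hx] at hp
        linarith
      have h2 : ∑ i ∈ S, (a * L ω n - (∫ s in Set.Ioc (0:ℝ) (n:ℝ), φ i s ω) - β * n)
          ≤ ∑ i ∈ S, (Z i ω + B i n ω) := Finset.sum_le_sum h1
      have h3 : ∑ i ∈ S, (a * L ω n - (∫ s in Set.Ioc (0:ℝ) (n:ℝ), φ i s ω) - β * n)
          = (S.card : ℝ) * (a * L ω n) - (∑ i ∈ S, ∫ s in Set.Ioc (0:ℝ) (n:ℝ), φ i s ω)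
            - (S.card : ℝ) * (β * n) := by
        rw [Finset.sum_sub_distrib, Finset.sum_sub_distrib, Finset.sum_const, Finset.sum_const]
        push_cast
        ring
      have h4 : (0:ℝ) ≤ (S.card : ℝ) * (a * L ω n) :=
        mul_nonneg (Nat.cast_nonneg _) (mul_nonneg ha (hL0 n hn0))
      have h5 := hsum_le n
      rw [h3] at h2
      nlinarith
    -- limit argument
    have hten : Tendsto (fun n : ℕ => (∑ i ∈ S, (Z i ω + B i n ω)) / n) atTop (𝓝 0) := by
      have heq : ∀ n : ℕ, (∑ i ∈ S, (Z i ω + B i n ω)) / (n:ℝ)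
          = ∑ i ∈ S, (Z i ω / n + B i n ω / n) := by
        intro n
        rw [Finset.sum_div]
        exact Finset.sum_congr rfl fun i _ => add_div _ _ _
      have h0 : Tendsto (fun n : ℕ => ∑ i ∈ S, (Z i ω / n + B i n ω / n)) atTop
          (𝓝 (∑ _i ∈ S, (0:ℝ))) :=
        tendsto_finset_sum _ fun i _ => by
          simpa using (tendsto_const_div_atTop_nhds_zero_nat (Z i ω)).add (hBl i)
      simp only [Finset.sum_const, smul_zero] at h0
      exact Tendsto.congr (fun n => (heq n).symm) h0
    set ε : ℝ := -((S.card : ℝ) * β + 1) with hε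
    have hεpos : 0 < ε := by simp only [hε]; linarith
    have hev := (hten.eventually (gt_mem_nhds hεpos)).and (eventually_ge_atTop 1)
    obtain ⟨n, hn1, hn2⟩ := hev.exists
    have hnpos : (0:ℝ) < (n:ℝ) := by exact_mod_cast hn2
    have := hkeyn n
    have hlt2 : (∑ i ∈ S, (Z i ω + B i n ω)) < ε * n := by
      rw [div_lt_iff₀ hnpos] at hn1
      exact hn1
    have : ε * (n:ℝ) = -((S.card : ℝ) * β * n) - n := by simp only [hε]; ring
    linarith [hkeyn n]
  by_cases hint : Integrable f P
  · have hmono := integral_mono_ae hint (integrable_const (-1/β)) hae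
    rw [integral_const, probReal_univ, one_smul] at hmono
    exact lt_of_le_of_lt hmono hlt
  · rw [integral_undef hint]
    linarith

end
end

section
/- The embedding ι : (Ξ, d_u ⊗ d̂) → (𝒟, d_m) defined by ι(f, ℓ) := f − G(ℓ) is continuous, where Ξ := 𝒞 × 𝕄 carries the product topology of compact (locally uniform) convergence on 𝒞 and the metric d̂ on 𝕄, and 𝒟 carries the Skorokhod M1 topology. -/
open MeasureTheory ProbabilityTheory Filter Set
open scoped ENNReal NNReal Classical

noncomputable section

/-- The left-limit value used in the completed graph of a càdlàg path on `[a, ∞)`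
(at the left endpoint `a` we use the value itself). -/
def leftVal (a : ℝ) (x : ℝ → ℝ) (t : ℝ) : ℝ :=
  if t = a then x a else Function.leftLim x t

/-- The completed graph of a càdlàg path `x` over `[a, b]`: the graph together with the
vertical segments joining `x(t-)` and `x(t)` at jump times. -/
def cGraph (a b : ℝ) (x : ℝ → ℝ) : Set (ℝ × ℝ) :=
  {p | p.2 ∈ Set.Icc a b ∧ p.1 ∈ segment ℝ (leftVal a x p.2) (x p.2)}

/-- The (M1) order on the completed graph: points are compared first by time, and within a
jump segment by distance to the left-limit value. -/
def graphLE (a : ℝ) (x : ℝ → ℝ) (p q : ℝ × ℝ) : Prop :=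
  p.2 < q.2 ∨ (p.2 = q.2 ∧ |p.1 - leftVal a x p.2| ≤ |q.1 - leftVal a x q.2|)

/-- `(u, r)` is a parametric representation of the completed graph of `x` over `[a, b]`:
a continuous non-decreasing (for the graph order) map from `[0,1]` onto the completed graph. -/
structure IsParamRep (a b : ℝ) (x : ℝ → ℝ) (u r : ℝ → ℝ) : Prop where
  cont_u : ContinuousOn u (Set.Icc 0 1)
  cont_r : ContinuousOn r (Set.Icc 0 1)
  mono : ∀ s s' : ℝ, s ∈ Set.Icc (0 : ℝ) 1 → s' ∈ Set.Icc (0 : ℝ) 1 → s ≤ s' →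
    graphLE a x (u s, r s) (u s', r s')
  surj : (fun s => (u s, r s)) '' Set.Icc (0 : ℝ) 1 = cGraph a b x

/-- The Skorokhod M1 distance between càdlàg paths restricted to `[a, b]`. -/
def m1DistOn (a b : ℝ) (x y : ℝ → ℝ) : ℝ :=
  sInf {c : ℝ | ∃ u₁ r₁ u₂ r₂ : ℝ → ℝ,
    IsParamRep a b x u₁ r₁ ∧ IsParamRep a b y u₂ r₂ ∧
    ∀ s ∈ Set.Icc (0 : ℝ) 1, |u₁ s - u₂ s| ≤ c ∧ |r₁ s - r₂ s| ≤ c}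

/-- A metric `d_m` for the Skorokhod M1 topology on càdlàg paths on `[-1, ∞)`. -/
def m1Dist (x y : ℝ → ℝ) : ℝ :=
  ∫ t in Set.Ioi (0 : ℝ), Real.exp (-t) * min (m1DistOn (-1) t x y) 1

namespace S10

open Function

/-- Monotone extension of `ℓ` to all of `ℝ`. -/
def eb (ℓ : ℝ → ℝ) : ℝ → ℝ := fun t => ℓ (max t (-1))

variable {ℓ : ℝ → ℝ}

lemma eb_eq {t : ℝ} (ht : (-1:ℝ) ≤ t) : eb ℓ t = ℓ t := by
  rw [eb, max_eq_left ht]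

lemma _root_.MemM.eb_mono (h : MemM ℓ) : Monotone (eb ℓ) := fun _ _ hab =>
  h.mono (Set.mem_Ici.2 (le_max_right _ _)) (Set.mem_Ici.2 (le_max_right _ _)) (max_le_max hab le_rfl)

lemma _root_.MemM.neg_one (h : MemM ℓ) : ℓ (-1) = 0 :=
  h.zero_on_neg (-1) le_rfl (by norm_num)

lemma _root_.MemM.eb_nonneg (h : MemM ℓ) (t : ℝ) : 0 ≤ eb ℓ t := by
  have h1 : eb ℓ (min t (-1)) ≤ eb ℓ t := h.eb_mono (min_le_left _ _)
  have h2 : eb ℓ (min t (-1)) = 0 := by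
    rcases le_total t (-1) with h' | h'
    · rw [min_eq_left h', eb, max_eq_right h', h.neg_one]
    · rw [min_eq_right h', eb, max_self, h.neg_one]
  linarith

lemma _root_.MemM.eb_le_one (h : MemM ℓ) (t : ℝ) : eb ℓ t ≤ 1 :=
  h.le_one _ (le_max_right _ _)

lemma _root_.MemM.eb_zero (h : MemM ℓ) {t : ℝ} (ht : t < 0) : eb ℓ t = 0 :=
  h.zero_on_neg _ (le_max_right _ _) (max_lt ht (by norm_num))

lemma _root_.MemM.eb_right_cont (h : MemM ℓ) {r : ℝ} (hr : (-1:ℝ) ≤ r) :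
    ContinuousWithinAt (eb ℓ) (Set.Ici r) r := by
  refine (h.right_cont r hr).congr (fun y hy => ?_) (eb_eq hr)
  exact eb_eq (le_trans hr hy)

lemma _root_.MemM.eb_mem (h : MemM ℓ) (t : ℝ) : eb ℓ t ∈ Set.Icc (-1:ℝ) 1 :=
  ⟨le_trans (by norm_num) (h.eb_nonneg t), h.eb_le_one t⟩

/-- strictly increasing "time + value" function. -/
def hh (ℓ : ℝ → ℝ) : ℝ → ℝ := fun s => s + eb ℓ s

lemma MemM.hh_strictMono (h : MemM ℓ) : StrictMono (hh ℓ) := fun a b hab =>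
  add_lt_add_of_lt_of_le hab (h.eb_mono hab.le)

/-- capped target value. -/
def aa (ℓ : ℝ → ℝ) (T c : ℝ) : ℝ := max (-1) (min c (T + ℓ T))

/-- the generalized-inverse defining set. -/
def SS (ℓ : ℝ → ℝ) (T c : ℝ) : Set ℝ := {s | s ∈ Set.Icc (-1:ℝ) T ∧ aa ℓ T c ≤ hh ℓ s}

/-- "time" coordinate of the canonical parametrization. -/
def RR (ℓ : ℝ → ℝ) (T c : ℝ) : ℝ := sInf (SS ℓ T c)

/-- "value" coordinate of the canonical parametrization. -/
def VV (ℓ : ℝ → ℝ) (T c : ℝ) : ℝ := aa ℓ T c - RR ℓ T c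

variable {T c : ℝ}

lemma hh_T (h : MemM ℓ) (hT : (-1:ℝ) ≤ T) : hh ℓ T = T + ℓ T := by
  rw [hh, eb_eq hT]

lemma aa_ge : (-1:ℝ) ≤ aa ℓ T c := le_max_left _ _

lemma aa_le_hhT (h : MemM ℓ) (hT : (0:ℝ) < T) : aa ℓ T c ≤ hh ℓ T := by
  have h0 := h.eb_nonneg T
  rw [eb_eq (by linarith : (-1:ℝ) ≤ T)] at h0
  rw [hh_T h (by linarith)]
  exact max_le (by linarith) (min_le_right _ _)

lemma T_mem_SS (h : MemM ℓ) (hT : (0:ℝ) < T) : T ∈ SS ℓ T c :=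
  ⟨⟨by linarith, le_rfl⟩, aa_le_hhT h hT⟩

lemma SS_nonempty (h : MemM ℓ) (hT : (0:ℝ) < T) : (SS ℓ T c).Nonempty :=
  ⟨T, T_mem_SS h hT⟩

lemma SS_bddBelow : BddBelow (SS ℓ T c) := ⟨-1, fun s hs => hs.1.1⟩

lemma RR_mem_Icc (h : MemM ℓ) (hT : (0:ℝ) < T) : RR ℓ T c ∈ Set.Icc (-1:ℝ) T :=
  ⟨le_csInf (SS_nonempty h hT) (fun s hs => hs.1.1), csInf_le SS_bddBelow (T_mem_SS h hT)⟩

lemma hh_lt_of_lt_RR (h : MemM ℓ) {s : ℝ} (hs : (-1:ℝ) ≤ s) (hsT : s ≤ T)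
    (hlt : s < RR ℓ T c) : hh ℓ s < aa ℓ T c := by
  by_contra hcon
  push_neg at hcon
  exact absurd (csInf_le SS_bddBelow ⟨⟨hs, hsT⟩, hcon⟩) (not_le.2 hlt)

/-- P1: the infimum is attained by right-continuity. -/
lemma aa_le_hh_RR (h : MemM ℓ) (hT : (0:ℝ) < T) : aa ℓ T c ≤ hh ℓ (RR ℓ T c) := by
  set r := RR ℓ T c with hr
  have hrIcc := RR_mem_Icc h hT (c := c)
  by_contra hcon
  push_neg at hcon
  have hhc : ContinuousWithinAt (hh ℓ) (Set.Ici r) r :=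
    (continuousWithinAt_id.add (h.eb_right_cont hrIcc.1))
  have hev : ∀ᶠ s in nhdsWithin r (Set.Ici r), hh ℓ s < aa ℓ T c :=
    Filter.Tendsto.eventually_lt_const hcon hhc.tendsto
  obtain ⟨ε, hε, hsub⟩ := Metric.mem_nhdsWithin_iff.1 hev
  obtain ⟨s, hsS, hslt⟩ := exists_lt_of_csInf_lt (SS_nonempty h hT)
    (show sInf (SS ℓ T c) < r + ε by change r < r + ε; linarith)
  have hrs : r ≤ s := csInf_le SS_bddBelow hsS
  have : hh ℓ s < aa ℓ T c := hsub ⟨by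
    rw [Metric.mem_ball, Real.dist_eq, abs_of_nonneg (by linarith)]; linarith, hrs⟩
  exact absurd hsS.2 (not_le.2 this)

/-- left limit value used at time `t` (with convention at `-1`). -/
def lv (ℓ : ℝ → ℝ) (t : ℝ) : ℝ := if t = -1 then eb ℓ (-1) else Function.leftLim (eb ℓ) t

lemma lv_le_eb (h : MemM ℓ) {t : ℝ} (ht : (-1:ℝ) ≤ t) : lv ℓ t ≤ eb ℓ t := by
  rw [lv]
  split_ifs with h'
  · rw [h']
  · exact h.eb_mono.leftLim_le le_rfl

lemma lv_nonneg (h : MemM ℓ) {t : ℝ} (ht : (-1:ℝ) ≤ t) : 0 ≤ lv ℓ t := by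
  rw [lv]
  split_ifs with h'
  · exact h.eb_nonneg _
  · exact le_trans (h.eb_nonneg (t - 1)) (h.eb_mono.le_leftLim (by linarith))

lemma lv_mem (h : MemM ℓ) {t : ℝ} (ht : (-1:ℝ) ≤ t) : lv ℓ t ∈ Set.Icc (-1:ℝ) 1 :=
  ⟨by linarith [lv_nonneg h ht], le_trans (lv_le_eb h ht) (h.eb_le_one t)⟩

/-- P3 -/
lemma leftLim_le_aa_sub (h : MemM ℓ) (hT : (0:ℝ) < T)
    (hr : -1 < RR ℓ T c) : Function.leftLim (eb ℓ) (RR ℓ T c) ≤ aa ℓ T c - RR ℓ T c := by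
  set r := RR ℓ T c with hrdef
  have h1 : Filter.Tendsto (eb ℓ) (nhdsWithin r (Set.Iio r)) (nhds (Function.leftLim (eb ℓ) r)) :=
    h.eb_mono.tendsto_leftLim r
  have h2 : Filter.Tendsto (fun s => aa ℓ T c - s) (nhdsWithin r (Set.Iio r))
      (nhds (aa ℓ T c - r)) :=
    ((continuous_const.sub continuous_id).tendsto r).mono_left nhdsWithin_le_nhds
  have hIcc := RR_mem_Icc h hT (c := c)
  refine le_of_tendsto_of_tendsto h1 h2 (Filter.eventually_of_mem
    (Ioo_mem_nhdsLT_of_mem ⟨hr, le_rfl⟩) (fun s hs => ?_))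
  show eb ℓ s ≤ aa ℓ T c - s
  have := hh_lt_of_lt_RR h (c := c) hs.1.le (le_trans hs.2.le hIcc.2) hs.2
  rw [hh] at this
  linarith

lemma VV_mem (h : MemM ℓ) (hT : (0:ℝ) < T) :
    lv ℓ (RR ℓ T c) ≤ VV ℓ T c ∧ VV ℓ T c ≤ eb ℓ (RR ℓ T c) := by
  have hIcc := RR_mem_Icc h hT (c := c)
  constructor
  · rw [lv]
    split_ifs with h'
    · have : eb ℓ (-1) = 0 := by rw [eb_eq le_rfl, h.neg_one]
      rw [this, VV, h']
      linarith [aa_ge (ℓ := ℓ) (T := T) (c := c)]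
    · exact leftLim_le_aa_sub h hT (lt_of_le_of_ne hIcc.1 (Ne.symm h'))
  · have := aa_le_hh_RR h hT (c := c)
    rw [hh] at this
    rw [VV]
    linarith

lemma VV_mem01 (h : MemM ℓ) (hT : (0:ℝ) < T) : VV ℓ T c ∈ Set.Icc (0:ℝ) 1 := by
  have h1 := VV_mem h hT (c := c)
  have hIcc := RR_mem_Icc h hT (c := c)
  exact ⟨le_trans (lv_nonneg h hIcc.1) h1.1, le_trans h1.2 (h.eb_le_one _)⟩

/-- 1-Lipschitz bounds for `aa`. -/
lemma aa_mono {c c' : ℝ} (hcc : c ≤ c') : aa ℓ T c ≤ aa ℓ T c' :=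
  max_le_max le_rfl (min_le_min hcc le_rfl)

lemma aa_lip {c c' : ℝ} (hcc : c ≤ c') : aa ℓ T c' ≤ aa ℓ T c + (c' - c) := by
  rw [aa, aa]
  rcases le_total c (T + ℓ T) with h1 | h1
  · rw [min_eq_left h1]
    rcases le_total c' (T + ℓ T) with h2 | h2
    · rw [min_eq_left h2]
      rcases le_total (-1:ℝ) c with h3 | h3
      · rw [max_eq_right h3, max_eq_right (by linarith)]; linarith
      · rw [max_eq_left h3]
        exact max_le (by linarith) (by linarith)
    · rw [min_eq_right h2]
      rcases le_total (-1:ℝ) c with h3 | h3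
      · rw [max_eq_right h3, max_eq_right (by linarith)]; linarith
      · rw [max_eq_left h3]
        exact max_le (by linarith) (by linarith)
  · rw [min_eq_right h1, min_eq_right (by linarith)]
    linarith

lemma aa_dist {c c' : ℝ} : |aa ℓ T c - aa ℓ T c'| ≤ |c - c'| := by
  rcases le_total c c' with h1 | h1
  · rw [abs_of_nonpos (by linarith [aa_mono (ℓ := ℓ) (T := T) h1]),
      abs_of_nonpos (by linarith)]
    linarith [aa_lip (ℓ := ℓ) (T := T) h1]
  · rw [abs_of_nonneg (by linarith [aa_mono (ℓ := ℓ) (T := T) h1]),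
      abs_of_nonneg (by linarith)]
    linarith [aa_lip (ℓ := ℓ) (T := T) h1]

/-- monotonicity and Lipschitz property of `RR`. -/
lemma RR_mono (h : MemM ℓ) (hT : (0:ℝ) < T) {c c' : ℝ} (hcc : c ≤ c') :
    RR ℓ T c ≤ RR ℓ T c' :=
  csInf_le_csInf SS_bddBelow (SS_nonempty h hT)
    (fun s hs => ⟨hs.1, le_trans (aa_mono hcc) hs.2⟩)

lemma RR_lip (h : MemM ℓ) (hT : (0:ℝ) < T) {c c' : ℝ} (hcc : c ≤ c') :
    RR ℓ T c' ≤ RR ℓ T c + (aa ℓ T c' - aa ℓ T c) := by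
  set d := aa ℓ T c' - aa ℓ T c with hd
  have hd0 : 0 ≤ d := by rw [hd]; linarith [aa_mono (ℓ := ℓ) (T := T) hcc]
  set r := RR ℓ T c with hrdef
  have hIcc := RR_mem_Icc h hT (c := c)
  rcases le_total T (r + d) with hc1 | hc1
  · exact le_trans (RR_mem_Icc h hT (c := c')).2 (by linarith)
  · refine csInf_le SS_bddBelow ⟨⟨by linarith [hIcc.1], hc1⟩, ?_⟩
    have h1 : aa ℓ T c ≤ hh ℓ r := aa_le_hh_RR h hT
    have h2 : eb ℓ r ≤ eb ℓ (r + d) := h.eb_mono (by linarith)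
    rw [hh] at h1 ⊢
    linarith

lemma RR_dist (h : MemM ℓ) (hT : (0:ℝ) < T) {c c' : ℝ} :
    |RR ℓ T c - RR ℓ T c'| ≤ |c - c'| := by
  rcases le_total c c' with h1 | h1
  · rw [abs_of_nonpos (by linarith [RR_mono h hT h1]), abs_of_nonpos (by linarith)]
    have := RR_lip h hT h1
    have := aa_dist (ℓ := ℓ) (T := T) (c := c) (c' := c')
    rw [abs_of_nonpos (by linarith [aa_mono (ℓ := ℓ) (T := T) h1]),
      abs_of_nonpos (by linarith)] at this
    linarith
  · rw [abs_of_nonneg (by linarith [RR_mono h hT h1]), abs_of_nonneg (by linarith)]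
    have h4 := RR_lip h hT h1
    have h3 := aa_dist (ℓ := ℓ) (T := T) (c := c) (c' := c')
    rw [abs_of_nonneg (by linarith [aa_mono (ℓ := ℓ) (T := T) h1]),
      abs_of_nonneg (by linarith)] at h3
    linarith

/-- P7: inverse property. -/
lemma RR_inv (h : MemM ℓ) (hT : (0:ℝ) < T) {t v : ℝ} (htm : t ∈ Set.Icc (-1:ℝ) T)
    (hv1 : lv ℓ t ≤ v) (hv2 : v ≤ eb ℓ t) :
    aa ℓ T (t + v) = t + v ∧ RR ℓ T (t + v) = t := by
  have hv0 : 0 ≤ v := le_trans (lv_nonneg h htm.1) hv1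
  have hc1 : (-1:ℝ) ≤ t + v := by linarith [htm.1]
  have hc2 : t + v ≤ T + ℓ T := by
    have := h.eb_mono htm.2
    rw [eb_eq (by linarith : (-1:ℝ) ≤ T)] at this
    linarith [htm.2]
  have haa : aa ℓ T (t + v) = t + v := by
    rw [aa, min_eq_left hc2, max_eq_right hc1]
  refine ⟨haa, le_antisymm ?_ ?_⟩
  · refine csInf_le SS_bddBelow ⟨htm, ?_⟩
    rw [haa, hh]; linarith
  · refine le_csInf (SS_nonempty h hT) (fun s hs => ?_)
    by_contra hcon
    push_neg at hcon
    have hst : s < t := hcon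
    have h2 : eb ℓ s ≤ lv ℓ t := by
      rw [lv]
      split_ifs with h'
      · exact absurd (h'.symm ▸ hst) (not_lt.2 hs.1.1)
      · exact h.eb_mono.le_leftLim hst
    have h3 := hs.2
    rw [haa, hh] at h3
    linarith

/-- the path. -/
def xpath (G f ℓ : ℝ → ℝ) : ℝ → ℝ := fun t => f t - G (ℓ t)

/-- affine parameter. -/
def cpar (ℓ : ℝ → ℝ) (T θ : ℝ) : ℝ := -1 + θ * (T + 1 + ℓ T)

def PR (ℓ : ℝ → ℝ) (T θ : ℝ) : ℝ := RR ℓ T (cpar ℓ T θ)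

def PV (ℓ : ℝ → ℝ) (T θ : ℝ) : ℝ := VV ℓ T (cpar ℓ T θ)

def PU (G f ℓ : ℝ → ℝ) (T θ : ℝ) : ℝ := f (PR ℓ T θ) - G (PV ℓ T θ)

variable {G f : ℝ → ℝ}

/-- computation of `leftVal` for the path. -/
lemma leftVal_xpath (hM : MemM ℓ) (hf : ContinuousOn f (Set.Ici (-1:ℝ)))
    (hG : ContinuousOn G (Set.Icc (-1:ℝ) 1)) {t : ℝ} (ht : (-1:ℝ) ≤ t) :
    leftVal (-1) (xpath G f ℓ) t = f t - G (lv ℓ t) := by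
  rcases eq_or_lt_of_le ht with h1 | h1
  · rw [leftVal, if_pos h1.symm, lv, if_pos h1.symm, ← h1, xpath]
    rw [eb_eq le_rfl]
  · rw [leftVal, if_neg (by intro h'; rw [h'] at h1; exact lt_irrefl _ h1), lv,
      if_neg (by intro h'; rw [h'] at h1; exact lt_irrefl _ h1)]
    have hIoo : Set.Ioo (-1:ℝ) t ∈ nhdsWithin t (Set.Iio t) :=
      Ioo_mem_nhdsLT_of_mem ⟨h1, le_rfl⟩
    -- limit of f
    have hftend : Filter.Tendsto f (nhdsWithin t (Set.Iio t)) (nhds (f t)) := by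
      have h2 : Filter.Tendsto f (nhdsWithin t (Set.Ici (-1:ℝ))) (nhds (f t)) :=
        (hf t ht).tendsto
      exact h2.mono_left (nhdsWithin_le_of_mem
        (Filter.mem_of_superset hIoo (fun y hy => le_of_lt hy.1)))
    -- limit of G ∘ ℓ
    set L := Function.leftLim (eb ℓ) t with hL
    have hLmem : L ∈ Set.Icc (-1:ℝ) 1 := by
      constructor
      · linarith [le_trans (hM.eb_nonneg (t-1)) (hM.eb_mono.le_leftLim
          (show t - 1 < t by linarith))]
      · exact le_trans (hM.eb_mono.leftLim_le le_rfl) (hM.eb_le_one t)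
    have hebtend : Filter.Tendsto (eb ℓ) (nhdsWithin t (Set.Iio t)) (nhds L) :=
      hM.eb_mono.tendsto_leftLim t
    have hGtend : Filter.Tendsto (fun s => G (eb ℓ s)) (nhdsWithin t (Set.Iio t))
        (nhds (G L)) := by
      refine ((hG L hLmem).tendsto).comp ?_
      rw [tendsto_nhdsWithin_iff]
      exact ⟨hebtend, Filter.Eventually.of_forall (fun s => hM.eb_mem s)⟩
    have hGtend' : Filter.Tendsto (fun s => G (ℓ s)) (nhdsWithin t (Set.Iio t))
        (nhds (G L)) := by
      refine hGtend.congr' ?_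
      filter_upwards [hIoo] with s hs
      rw [eb_eq hs.1.le]
    have hxt : Filter.Tendsto (xpath G f ℓ) (nhdsWithin t (Set.Iio t))
        (nhds (f t - G L)) := hftend.sub hGtend'
    exact leftLim_eq_of_tendsto hxt

lemma cpar_pos (hM : MemM ℓ) (hT : (0:ℝ) < T) : 0 < T + 1 + ℓ T := by
  have := hM.eb_nonneg T
  rw [eb_eq (by linarith : (-1:ℝ) ≤ T)] at this
  linarith

lemma continuous_RR (hM : MemM ℓ) (hT : (0:ℝ) < T) : Continuous (RR ℓ T) := by
  refine LipschitzWith.continuous (K := 1) (LipschitzWith.of_dist_le_mul (fun c c' => ?_))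
  rw [Real.dist_eq, Real.dist_eq, NNReal.coe_one, one_mul]
  exact RR_dist hM hT

lemma continuous_aaRV (hM : MemM ℓ) (hT : (0:ℝ) < T) : Continuous (aa ℓ T) := by
  refine LipschitzWith.continuous (K := 1) (LipschitzWith.of_dist_le_mul (fun c c' => ?_))
  rw [Real.dist_eq, Real.dist_eq, NNReal.coe_one, one_mul]
  exact aa_dist

lemma continuous_cpar : Continuous (cpar ℓ T) := by
  unfold cpar; fun_prop

lemma continuous_PR (hM : MemM ℓ) (hT : (0:ℝ) < T) : Continuous (PR ℓ T) :=
  (continuous_RR hM hT).comp continuous_cpar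

lemma continuous_PV (hM : MemM ℓ) (hT : (0:ℝ) < T) : Continuous (PV ℓ T) := by
  have : PV ℓ T = fun θ => aa ℓ T (cpar ℓ T θ) - PR ℓ T θ := rfl
  rw [this]
  exact ((continuous_aaRV hM hT).comp continuous_cpar).sub (continuous_PR hM hT)

lemma PR_mem (hM : MemM ℓ) (hT : (0:ℝ) < T) (θ : ℝ) : PR ℓ T θ ∈ Set.Icc (-1:ℝ) T :=
  RR_mem_Icc hM hT

lemma PV_mem (hM : MemM ℓ) (hT : (0:ℝ) < T) (θ : ℝ) : PV ℓ T θ ∈ Set.Icc (0:ℝ) 1 :=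
  VV_mem01 hM hT

theorem isParamRep_xpath (hM : MemM ℓ) (hf : ContinuousOn f (Set.Ici (-1:ℝ)))
    (hG : ContinuousOn G (Set.Icc (-1:ℝ) 1)) (hGm : MonotoneOn G (Set.Icc (-1:ℝ) 1))
    (hT : (0:ℝ) < T) :
    IsParamRep (-1) T (xpath G f ℓ) (PU G f ℓ T) (PR ℓ T) := by
  have hMpos := cpar_pos hM hT
  have hPV01 : ∀ θ, PV ℓ T θ ∈ Set.Icc (-1:ℝ) 1 := fun θ =>
    ⟨by linarith [(PV_mem hM hT θ).1], (PV_mem hM hT θ).2⟩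
  have hlvV : ∀ θ, lv ℓ (PR ℓ T θ) ≤ PV ℓ T θ := fun θ => (VV_mem hM hT).1
  have hVeb : ∀ θ, PV ℓ T θ ≤ eb ℓ (PR ℓ T θ) := fun θ => (VV_mem hM hT).2
  have hlvmem : ∀ θ, lv ℓ (PR ℓ T θ) ∈ Set.Icc (-1:ℝ) 1 := fun θ =>
    lv_mem hM (PR_mem hM hT θ).1
  have hebmem : ∀ θ, eb ℓ (PR ℓ T θ) ∈ Set.Icc (-1:ℝ) 1 := fun θ => hM.eb_mem _
  constructor
  · -- cont_u
    refine ContinuousOn.sub ?_ ?_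
    · exact hf.comp (continuous_PR hM hT).continuousOn
        (fun θ _ => (PR_mem hM hT θ).1)
    · exact hG.comp (continuous_PV hM hT).continuousOn (fun θ _ => hPV01 θ)
  · exact (continuous_PR hM hT).continuousOn
  · -- mono
    intro θ θ' hθ hθ' hle
    have hc : cpar ℓ T θ ≤ cpar ℓ T θ' := by
      rw [cpar, cpar]
      nlinarith
    have hr : PR ℓ T θ ≤ PR ℓ T θ' := RR_mono hM hT hc
    rcases lt_or_eq_of_le hr with h1 | h1
    · exact Or.inl h1
    · refine Or.inr ⟨h1, ?_⟩
      simp only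
      rw [leftVal_xpath hM hf hG (PR_mem hM hT θ).1,
        leftVal_xpath hM hf hG (PR_mem hM hT θ').1]
      have e1 : PU G f ℓ T θ - (f (PR ℓ T θ) - G (lv ℓ (PR ℓ T θ))) =
          -(G (PV ℓ T θ) - G (lv ℓ (PR ℓ T θ))) := by rw [PU]; ring
      have e2 : PU G f ℓ T θ' - (f (PR ℓ T θ') - G (lv ℓ (PR ℓ T θ'))) =
          -(G (PV ℓ T θ') - G (lv ℓ (PR ℓ T θ'))) := by rw [PU]; ring
      rw [e1, e2, abs_neg, abs_neg,
        abs_of_nonneg (by linarith [hGm (hlvmem θ) (hPV01 θ) (hlvV θ)]),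
        abs_of_nonneg (by linarith [hGm (hlvmem θ') (hPV01 θ') (hlvV θ')])]
      have hVle : PV ℓ T θ ≤ PV ℓ T θ' := by
        have := aa_mono (ℓ := ℓ) (T := T) hc
        rw [PV, PV, VV, VV, ← PR, ← PR, h1]
        linarith
      have hGle : G (PV ℓ T θ) ≤ G (PV ℓ T θ') := hGm (hPV01 θ) (hPV01 θ') hVle
      have : lv ℓ (PR ℓ T θ) = lv ℓ (PR ℓ T θ') := by rw [h1]
      rw [this]
      linarith
  · -- surj
    ext ⟨p1, p2⟩
    simp only [Set.mem_image, cGraph, Set.mem_setOf_eq]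
    constructor
    · rintro ⟨θ, hθ, heq⟩
      cases heq
      refine ⟨PR_mem hM hT θ, ?_⟩
      have hr1 : (-1:ℝ) ≤ PR ℓ T θ := (PR_mem hM hT θ).1
      have hxr : xpath G f ℓ (PR ℓ T θ) = f (PR ℓ T θ) - G (eb ℓ (PR ℓ T θ)) := by
        rw [xpath, eb_eq hr1]
      have hGlv_eb : G (lv ℓ (PR ℓ T θ)) ≤ G (eb ℓ (PR ℓ T θ)) :=
        hGm (hlvmem θ) (hebmem θ) (lv_le_eb hM hr1)
      show PU G f ℓ T θ ∈ segment ℝ (leftVal (-1) (xpath G f ℓ) (PR ℓ T θ))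
        (xpath G f ℓ (PR ℓ T θ))
      rw [leftVal_xpath hM hf hG hr1, hxr, segment_symm,
        segment_eq_Icc (by linarith : f (PR ℓ T θ) - G (eb ℓ (PR ℓ T θ)) ≤
          f (PR ℓ T θ) - G (lv ℓ (PR ℓ T θ)))]
      constructor
      · have : G (PV ℓ T θ) ≤ G (eb ℓ (PR ℓ T θ)) := hGm (hPV01 θ) (hebmem θ) (hVeb θ)
        rw [PU]; linarith
      · have : G (lv ℓ (PR ℓ T θ)) ≤ G (PV ℓ T θ) := hGm (hlvmem θ) (hPV01 θ) (hlvV θ)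
        rw [PU]; linarith
    · rintro ⟨htm, hseg⟩
      have ht1 : (-1:ℝ) ≤ p2 := htm.1
      have hxr : xpath G f ℓ p2 = f p2 - G (eb ℓ p2) := by rw [xpath, eb_eq ht1]
      have hGlv_eb : G (lv ℓ p2) ≤ G (eb ℓ p2) :=
        hGm (lv_mem hM ht1) (hM.eb_mem p2) (lv_le_eb hM ht1)
      rw [leftVal_xpath hM hf hG ht1, hxr, segment_symm,
        segment_eq_Icc (by linarith : f p2 - G (eb ℓ p2) ≤ f p2 - G (lv ℓ p2))] at hseg
      obtain ⟨hs1, hs2⟩ := hseg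
      have hgmem : f p2 - p1 ∈ Set.Icc (G (lv ℓ p2)) (G (eb ℓ p2)) :=
        ⟨by linarith, by linarith⟩
      have hsub : Set.Icc (lv ℓ p2) (eb ℓ p2) ⊆ Set.Icc (-1:ℝ) 1 := fun z hz =>
        ⟨le_trans (lv_mem hM ht1).1 hz.1, le_trans hz.2 (hM.eb_mem p2).2⟩
      obtain ⟨v, hv, hGv⟩ := intermediate_value_Icc (lv_le_eb hM ht1) (hG.mono hsub) hgmem
      have hinv := RR_inv hM hT htm hv.1 hv.2
      have hv0 : 0 ≤ v := le_trans (lv_nonneg hM ht1) hv.1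
      have hcle : p2 + v ≤ T + ℓ T := by
        have h5 := hM.eb_mono htm.2
        rw [eb_eq (by linarith : (-1:ℝ) ≤ T)] at h5
        linarith [hv.2, htm.2]
      refine ⟨(p2 + v + 1) / (T + 1 + ℓ T), ⟨div_nonneg (by linarith) hMpos.le,
        (div_le_one hMpos).2 (by linarith)⟩, ?_⟩
      have hcc : cpar ℓ T ((p2 + v + 1) / (T + 1 + ℓ T)) = p2 + v := by
        rw [cpar, div_mul_cancel₀ _ (ne_of_gt hMpos)]
        ring
      have hPR : PR ℓ T ((p2 + v + 1) / (T + 1 + ℓ T)) = p2 := by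
        rw [PR, hcc]; exact hinv.2
      have hPV : PV ℓ T ((p2 + v + 1) / (T + 1 + ℓ T)) = v := by
        rw [PV, hcc]
        show aa ℓ T (p2 + v) - RR ℓ T (p2 + v) = v
        rw [hinv.1, hinv.2]; ring
      have hPU : PU G f ℓ T ((p2 + v + 1) / (T + 1 + ℓ T)) = p1 := by
        rw [PU, hPR, hPV, hGv]; ring
      simp only [hPU, hPR]

variable {m fn : ℝ → ℝ}

lemma aa_dist_fun : |aa ℓ T c - aa m T c| ≤ |ℓ T - m T| := by
  rw [aa, aa, max_comm (-1) (min c (T + ℓ T)), max_comm (-1) (min c (T + m T))]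
  refine le_trans (abs_max_sub_max_le_abs _ _ _) ?_
  refine le_trans (abs_min_sub_min_le_max _ _ _ _) ?_
  refine max_le ?_ ?_
  · simp
  · rw [show T + ℓ T - (T + m T) = ℓ T - m T by ring]

/-- one-sided comparison of the time coordinates. -/
lemma RR_compare (hM : MemM ℓ) (hMn : MemM m) (hT : (0:ℝ) < T) {ε δ : ℝ}
    (hε : 0 < ε)
    (hA : ∀ t ∈ Set.Icc (-1:ℝ) T, eb m t ≤ eb ℓ (t + ε) + ε)
    (hδ : |m T - ℓ T| ≤ δ) (hδ0 : 0 ≤ δ) (c : ℝ) :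
    RR ℓ T c ≤ RR m T c + (2*ε + δ) := by
  set r' := RR m T c with hr'
  have hr'Icc := RR_mem_Icc hMn hT (c := c)
  rcases le_total T (r' + (2*ε + δ)) with hcase | hcase
  · exact le_trans (RR_mem_Icc hM hT (c := c)).2 hcase
  · refine csInf_le SS_bddBelow ⟨⟨by linarith [hr'Icc.1], hcase⟩, ?_⟩
    have h1 : aa ℓ T c ≤ aa m T c + δ := by
      have := aa_dist_fun (ℓ := ℓ) (m := m) (T := T) (c := c)
      have h2 : |ℓ T - m T| = |m T - ℓ T| := abs_sub_comm _ _
      have h3 := abs_le.1 (le_trans this (h2 ▸ hδ) : |aa ℓ T c - aa m T c| ≤ δ)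
      linarith [h3.2]
    have h2 : aa m T c ≤ r' + eb m r' := by
      have := aa_le_hh_RR hMn hT (c := c)
      rw [hh] at this
      exact this
    have h3 : eb m r' ≤ eb ℓ (r' + ε) + ε := hA r' hr'Icc
    have h4 : eb ℓ (r' + ε) ≤ eb ℓ (r' + (2*ε + δ)) := hM.eb_mono (by linarith)
    rw [hh]
    linarith

lemma PR_compare (hM : MemM ℓ) (hMn : MemM m) (hT : (0:ℝ) < T) {ε δ : ℝ}
    (hε : 0 < ε)
    (hA : ∀ t ∈ Set.Icc (-1:ℝ) T, eb m t ≤ eb ℓ (t + ε) + ε)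
    (hB : ∀ t ∈ Set.Icc (-1:ℝ) T, eb ℓ t ≤ eb m (t + ε) + ε)
    (hδ : |m T - ℓ T| ≤ δ) (hδ0 : 0 ≤ δ) {θ : ℝ} (hθ : θ ∈ Set.Icc (0:ℝ) 1) :
    |PR m T θ - PR ℓ T θ| ≤ 2*ε + 2*δ := by
  have hcd : |cpar m T θ - cpar ℓ T θ| ≤ δ := by
    rw [cpar, cpar, show -1 + θ * (T + 1 + m T) - (-1 + θ * (T + 1 + ℓ T)) =
      θ * (m T - ℓ T) by ring, abs_mul, abs_of_nonneg hθ.1]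
    calc θ * |m T - ℓ T| ≤ 1 * |m T - ℓ T| :=
          mul_le_mul_of_nonneg_right hθ.2 (abs_nonneg _)
      _ ≤ δ := by rw [one_mul]; exact hδ
  have h1 : |RR m T (cpar m T θ) - RR m T (cpar ℓ T θ)| ≤ δ :=
    le_trans (RR_dist hMn hT) hcd
  have h2 : RR ℓ T (cpar ℓ T θ) ≤ RR m T (cpar ℓ T θ) + (2*ε + δ) :=
    RR_compare hM hMn hT hε hA hδ hδ0 _
  have h3 : RR m T (cpar ℓ T θ) ≤ RR ℓ T (cpar ℓ T θ) + (2*ε + δ) :=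
    RR_compare hMn hM hT hε hB (by rw [abs_sub_comm]; exact hδ) hδ0 _
  rw [PR, PR]
  have h4 := abs_le.1 h1
  rw [abs_le]
  constructor <;> linarith [h4.1, h4.2]

lemma PV_compare (hM : MemM ℓ) (hMn : MemM m) (hT : (0:ℝ) < T) {ε δ : ℝ}
    (hε : 0 < ε)
    (hA : ∀ t ∈ Set.Icc (-1:ℝ) T, eb m t ≤ eb ℓ (t + ε) + ε)
    (hB : ∀ t ∈ Set.Icc (-1:ℝ) T, eb ℓ t ≤ eb m (t + ε) + ε)
    (hδ : |m T - ℓ T| ≤ δ) (hδ0 : 0 ≤ δ) {θ : ℝ} (hθ : θ ∈ Set.Icc (0:ℝ) 1) :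
    |PV m T θ - PV ℓ T θ| ≤ 2*ε + 4*δ := by
  have hcd : |cpar m T θ - cpar ℓ T θ| ≤ δ := by
    rw [cpar, cpar, show -1 + θ * (T + 1 + m T) - (-1 + θ * (T + 1 + ℓ T)) =
      θ * (m T - ℓ T) by ring, abs_mul, abs_of_nonneg hθ.1]
    calc θ * |m T - ℓ T| ≤ 1 * |m T - ℓ T| :=
          mul_le_mul_of_nonneg_right hθ.2 (abs_nonneg _)
      _ ≤ δ := by rw [one_mul]; exact hδ
  have h1 : |aa m T (cpar m T θ) - aa m T (cpar ℓ T θ)| ≤ δ := le_trans aa_dist hcd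
  have h2 : |aa m T (cpar ℓ T θ) - aa ℓ T (cpar ℓ T θ)| ≤ δ :=
    le_trans (aa_dist_fun (ℓ := m) (m := ℓ)) hδ
  have h3 := PR_compare hM hMn hT hε hA hB hδ hδ0 hθ
  have e1 := abs_le.1 h1
  have e2 := abs_le.1 h2
  have e3 := abs_le.1 h3
  rw [PV, PV, VV, VV, ← PR, ← PR, abs_le]
  constructor <;> linarith [e1.1, e1.2, e2.1, e2.2, e3.1, e3.2]

lemma m1DistOn_nonneg (a b : ℝ) (x y : ℝ → ℝ) : 0 ≤ m1DistOn a b x y := by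
  refine Real.sInf_nonneg (fun c hc => ?_)
  obtain ⟨u₁, r₁, u₂, r₂, _, _, h3⟩ := hc
  exact le_trans (abs_nonneg _) ((h3 0 ⟨le_rfl, zero_le_one⟩).1)

/-- the key quantitative bound on the M1 distance. -/
lemma m1DistOn_le (hM : MemM ℓ) (hMn : MemM m)
    (hf : ContinuousOn f (Set.Ici (-1:ℝ))) (hfn : ContinuousOn fn (Set.Ici (-1:ℝ)))
    (hG : ContinuousOn G (Set.Icc (-1:ℝ) 1)) (hGm : MonotoneOn G (Set.Icc (-1:ℝ) 1))
    (hT : (0:ℝ) < T) {ε δ F Af Ag : ℝ}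
    (hε : 0 < ε) (hδ0 : 0 ≤ δ)
    (hA : ∀ t ∈ Set.Icc (-1:ℝ) T, eb m t ≤ eb ℓ (t + ε) + ε)
    (hB : ∀ t ∈ Set.Icc (-1:ℝ) T, eb ℓ t ≤ eb m (t + ε) + ε)
    (hδ : |m T - ℓ T| ≤ δ)
    (hFb : ∀ t ∈ Set.Icc (-1:ℝ) T, |fn t - f t| ≤ F)
    (hAf : ∀ r r', r ∈ Set.Icc (-1:ℝ) T → r' ∈ Set.Icc (-1:ℝ) T →
      |r - r'| ≤ 2*ε + 2*δ → |f r - f r'| ≤ Af)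
    (hAg : ∀ v v', v ∈ Set.Icc (0:ℝ) 1 → v' ∈ Set.Icc (0:ℝ) 1 →
      |v - v'| ≤ 2*ε + 4*δ → |G v - G v'| ≤ Ag) :
    m1DistOn (-1) T (xpath G fn m) (xpath G f ℓ) ≤ max (F + Af + Ag) (2*ε + 4*δ) := by
  refine csInf_le ⟨0, fun c hc => ?_⟩ ?_
  · obtain ⟨u₁, r₁, u₂, r₂, _, _, h3⟩ := hc
    exact le_trans (abs_nonneg _) ((h3 0 ⟨le_rfl, zero_le_one⟩).1)
  · refine ⟨PU G fn m T, PR m T, PU G f ℓ T, PR ℓ T,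
      isParamRep_xpath hMn hfn hG hGm hT, isParamRep_xpath hM hf hG hGm hT,
      fun θ hθ => ⟨?_, ?_⟩⟩
    · -- space bound
      have hrm := PR_mem hMn hT θ
      have hrl := PR_mem hM hT θ
      have h1 : |fn (PR m T θ) - f (PR m T θ)| ≤ F := hFb _ hrm
      have h2 : |f (PR m T θ) - f (PR ℓ T θ)| ≤ Af :=
        hAf _ _ hrm hrl (PR_compare hM hMn hT hε hA hB hδ hδ0 hθ)
      have h3 : |G (PV m T θ) - G (PV ℓ T θ)| ≤ Ag :=
        hAg _ _ (PV_mem hMn hT θ) (PV_mem hM hT θ)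
          (PV_compare hM hMn hT hε hA hB hδ hδ0 hθ)
      have e : PU G fn m T θ - PU G f ℓ T θ =
          (fn (PR m T θ) - f (PR m T θ)) + (f (PR m T θ) - f (PR ℓ T θ))
          - (G (PV m T θ) - G (PV ℓ T θ)) := by
        rw [PU, PU]; ring
      refine le_trans ?_ (le_max_left _ _)
      rw [e]
      calc |(fn (PR m T θ) - f (PR m T θ)) + (f (PR m T θ) - f (PR ℓ T θ))
            - (G (PV m T θ) - G (PV ℓ T θ))|
          ≤ |(fn (PR m T θ) - f (PR m T θ)) + (f (PR m T θ) - f (PR ℓ T θ))|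
            + |G (PV m T θ) - G (PV ℓ T θ)| := abs_sub _ _
        _ ≤ |fn (PR m T θ) - f (PR m T θ)| + |f (PR m T θ) - f (PR ℓ T θ)|
            + |G (PV m T θ) - G (PV ℓ T θ)| := by
              linarith [abs_add_le (fn (PR m T θ) - f (PR m T θ)) (f (PR m T θ) - f (PR ℓ T θ))]
        _ ≤ F + Af + Ag := by linarith
    · -- time bound
      refine le_trans (PR_compare hM hMn hT hε hA hB hδ hδ0 hθ) (le_trans ?_ (le_max_right _ _))
      linarith

def LS (a b : ℝ → ℝ) : Set ℝ :=
  {ε | 0 < ε ∧ ∀ t : ℝ, 0 ≤ t → b t ≤ a (t + ε) + ε ∧ a (t - ε) - ε ≤ b t}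

lemma levyDist_eq_LS (a b : ℝ → ℝ) : levyDist a b = sInf (LS a b) := rfl

lemma _root_.MemM.nonneg' (h : MemM ℓ) {u : ℝ} (hu : (-1:ℝ) ≤ u) : 0 ≤ ℓ u := by
  have := h.eb_nonneg u
  rwa [eb_eq hu] at this

lemma one_mem_LS (hMn : MemM m) (hM : MemM ℓ) {s : ℝ} (hs : 0 < s) :
    (1:ℝ) ∈ LS (stopAt m s) (stopAt ℓ s) := by
  refine ⟨one_pos, fun t ht => ⟨?_, ?_⟩⟩
  · show ℓ (min s t) ≤ m (min s (t + 1)) + 1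
    have h1 : ℓ (min s t) ≤ 1 := hM.le_one _ (le_trans (by norm_num)
      (le_min hs.le ht : (0:ℝ) ≤ min s t))
    have h2 : (0:ℝ) ≤ m (min s (t + 1)) := hMn.nonneg' (le_trans (by norm_num)
      (le_min hs.le (by linarith) : (0:ℝ) ≤ min s (t+1)))
    linarith
  · show m (min s (t - 1)) - 1 ≤ ℓ (min s t)
    have h2 : (0:ℝ) ≤ ℓ (min s t) := hM.nonneg' (le_trans (by norm_num)
      (le_min hs.le ht))
    rcases le_or_gt 1 t with h3 | h3
    · have : m (min s (t - 1)) ≤ 1 := hMn.le_one _ (le_trans (by norm_num)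
        (le_min hs.le (by linarith) : (0:ℝ) ≤ min s (t-1)))
      linarith
    · have harg : min s (t - 1) = t - 1 := min_eq_right (by linarith)
      rw [harg, hMn.zero_on_neg _ (by linarith) (by linarith)]
      linarith

lemma LS_nonempty (hMn : MemM m) (hM : MemM ℓ) {s : ℝ} (hs : 0 < s) :
    (LS (stopAt m s) (stopAt ℓ s)).Nonempty := ⟨1, one_mem_LS hMn hM hs⟩

lemma exists_LS_lt (hMn : MemM m) (hM : MemM ℓ) {s γ : ℝ} (hs : 0 < s) (hγ0 : 0 < γ)
    (hg : min (levyDist (stopAt m s) (stopAt ℓ s)) 1 ≤ γ) (hγ : γ < 1) :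
    ∃ ε ∈ LS (stopAt m s) (stopAt ℓ s), ε < 2*γ := by
  have hld : levyDist (stopAt m s) (stopAt ℓ s) ≤ γ := by
    rcases min_cases (levyDist (stopAt m s) (stopAt ℓ s)) 1 with ⟨he, _⟩ | ⟨he, hlt⟩
    · rwa [he] at hg
    · rw [he] at hg; linarith
  rw [levyDist_eq_LS] at hld
  exact exists_lt_of_csInf_lt (LS_nonempty hMn hM hs) (by linarith)

/-- extraction of the pointwise Lévy inequalities. -/
lemma LS_props (hMn : MemM m) (hM : MemM ℓ) (hT : (0:ℝ) < T) {ε : ℝ} (hε1 : ε < 1)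
    (hmem : ε ∈ LS (stopAt m (T+1)) (stopAt ℓ (T+1))) :
    (∀ t ∈ Set.Icc (-1:ℝ) T, eb m t ≤ eb ℓ (t + ε) + ε) ∧
    (∀ t ∈ Set.Icc (-1:ℝ) T, eb ℓ t ≤ eb m (t + ε) + ε) ∧
    |m T - ℓ T| ≤ (eb ℓ (T + ε) - eb ℓ (T - ε)) + ε := by
  obtain ⟨hε0, hLS⟩ := hmem
  have hA : ∀ t ∈ Set.Icc (-1:ℝ) T, eb m t ≤ eb ℓ (t + ε) + ε := by
    intro t htm
    rcases lt_or_ge t 0 with h1 | h1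
    · rw [hMn.eb_zero h1]
      linarith [hM.eb_nonneg (t + ε)]
    · have := (hLS (t + ε) (by linarith)).2
      show eb m t ≤ eb ℓ (t + ε) + ε
      rw [eb_eq htm.1, eb_eq (by linarith : (-1:ℝ) ≤ t + ε)]
      have e1 : t + ε - ε = t := by ring
      rw [stopAt, stopAt, e1, min_eq_right (by linarith [htm.2] : t ≤ T + 1),
        min_eq_right (by linarith [htm.2] : t + ε ≤ T + 1)] at this
      linarith
  refine ⟨hA, ?_, ?_⟩
  · intro t htm
    rcases lt_or_ge t 0 with h1 | h1
    · rw [hM.eb_zero h1]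
      linarith [hMn.eb_nonneg (t + ε)]
    · have := (hLS t h1).1
      rw [stopAt, stopAt, min_eq_right (by linarith [htm.2] : t ≤ T + 1),
        min_eq_right (by linarith [htm.2] : t + ε ≤ T + 1)] at this
      rw [eb_eq htm.1, eb_eq (by linarith : (-1:ℝ) ≤ t + ε)]
      linarith
  · -- |m T - ℓ T| bound
    have hub : m T ≤ ℓ (T + ε) + ε := by
      have := hA T ⟨by linarith, le_rfl⟩
      rwa [eb_eq (by linarith : (-1:ℝ) ≤ T), eb_eq (by linarith : (-1:ℝ) ≤ T + ε)] at this
    have hlb : ℓ (T - ε) ≤ m T + ε := by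
      rcases lt_or_ge (T - ε) 0 with h1 | h1
      · rw [hM.zero_on_neg _ (by linarith) h1]
        linarith [hMn.nonneg' (by linarith : (-1:ℝ) ≤ T)]
      · have := (hLS (T - ε) h1).1
        have e1 : T - ε + ε = T := by ring
        rw [stopAt, stopAt, e1, min_eq_right (by linarith : T - ε ≤ T + 1),
          min_eq_right (by linarith : T ≤ T + 1)] at this
        linarith
    have hm1 : ℓ (T - ε) ≤ ℓ T := hM.mono (Set.mem_Ici.2 (by linarith))
      (Set.mem_Ici.2 (by linarith)) (by linarith)
    have hm2 : ℓ T ≤ ℓ (T + ε) := hM.mono (Set.mem_Ici.2 (by linarith))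
      (Set.mem_Ici.2 (by linarith)) (by linarith)
    rw [abs_le, eb_eq (by linarith : (-1:ℝ) ≤ T + ε), eb_eq (by linarith : (-1:ℝ) ≤ T - ε)]
    constructor <;> linarith

lemma _root_.MemM.mono' (h : MemM ℓ) {x y : ℝ} (hx : (-1:ℝ) ≤ x) (hxy : x ≤ y) :
    ℓ x ≤ ℓ y := h.mono (Set.mem_Ici.2 hx) (Set.mem_Ici.2 (le_trans hx hxy)) hxy

lemma key_stop (h : MemM ℓ) {s u a : ℝ} (hs : 0 < s) (hsu : s ≤ u) (ha : (-1:ℝ) ≤ a) :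
    ℓ (min u a) ≤ ℓ (min s a) + (ℓ u - ℓ s) := by
  rcases le_total a s with h1 | h1
  · rw [min_eq_right h1, min_eq_right (le_trans h1 hsu)]
    have := h.mono' (by linarith) hsu
    linarith
  · rw [min_eq_left h1]
    have h2 : ℓ (min u a) ≤ ℓ u := h.mono' (le_min (by linarith) ha) (min_le_left _ _)
    linarith

lemma LS_bddBelow (a b : ℝ → ℝ) : BddBelow (LS a b) := ⟨0, fun ε hε => hε.1.le⟩

lemma LS_transport_up (hMn : MemM m) (hM : MemM ℓ) {s u ε : ℝ} (hs : 0 < s) (hsu : s ≤ u)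
    (hε1 : ε ≤ 1) (hε'1 : ε + ((ℓ u - ℓ s) + (m u - m s)) ≤ 1)
    (hmem : ε ∈ LS (stopAt m s) (stopAt ℓ s)) :
    ε + ((ℓ u - ℓ s) + (m u - m s)) ∈ LS (stopAt m u) (stopAt ℓ u) := by
  obtain ⟨hε0, hLS⟩ := hmem
  set Δl := ℓ u - ℓ s with hΔl
  set Δm := m u - m s with hΔm
  have hΔl0 : 0 ≤ Δl := by rw [hΔl]; linarith [hM.mono' (by linarith : (-1:ℝ) ≤ s) hsu]
  have hΔm0 : 0 ≤ Δm := by rw [hΔm]; linarith [hMn.mono' (by linarith : (-1:ℝ) ≤ s) hsu]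
  refine ⟨by linarith, fun t ht => ⟨?_, ?_⟩⟩
  · show ℓ (min u t) ≤ m (min u (t + (ε + (Δl + Δm)))) + (ε + (Δl + Δm))
    have h1 : ℓ (min u t) ≤ ℓ (min s t) + Δl := key_stop hM hs hsu (by linarith)
    have h2 := (hLS t ht).1
    rw [stopAt, stopAt] at h2
    have h3 : m (min s (t + ε)) ≤ m (min u (t + (ε + (Δl + Δm)))) :=
      hMn.mono' (le_min (by linarith) (by linarith))
        (min_le_min hsu (by linarith))
    linarith
  · show m (min u (t - (ε + (Δl + Δm)))) - (ε + (Δl + Δm)) ≤ ℓ (min u t)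
    have h1 : m (min u (t - (ε + (Δl + Δm)))) ≤ m (min u (t - ε)) :=
      hMn.mono' (le_min (by linarith) (by linarith)) (min_le_min le_rfl (by linarith))
    have h2 : m (min u (t - ε)) ≤ m (min s (t - ε)) + Δm := key_stop hMn hs hsu (by linarith)
    have h3 := (hLS t ht).2
    rw [stopAt, stopAt] at h3
    have h4 : ℓ (min s t) ≤ ℓ (min u t) :=
      hM.mono' (le_min (by linarith) (by linarith)) (min_le_min hsu le_rfl)
    linarith

lemma LS_transport_down (hMn : MemM m) (hM : MemM ℓ) {s u ε : ℝ} (hs : 0 < s) (hsu : s ≤ u)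
    (hε1 : ε ≤ 1) (hε'1 : ε + ((ℓ u - ℓ s) + (m u - m s)) ≤ 1)
    (hmem : ε ∈ LS (stopAt m u) (stopAt ℓ u)) :
    ε + ((ℓ u - ℓ s) + (m u - m s)) ∈ LS (stopAt m s) (stopAt ℓ s) := by
  obtain ⟨hε0, hLS⟩ := hmem
  set Δl := ℓ u - ℓ s with hΔl
  set Δm := m u - m s with hΔm
  have hΔl0 : 0 ≤ Δl := by rw [hΔl]; linarith [hM.mono' (by linarith : (-1:ℝ) ≤ s) hsu]
  have hΔm0 : 0 ≤ Δm := by rw [hΔm]; linarith [hMn.mono' (by linarith : (-1:ℝ) ≤ s) hsu]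
  refine ⟨by linarith, fun t ht => ⟨?_, ?_⟩⟩
  · show ℓ (min s t) ≤ m (min s (t + (ε + (Δl + Δm)))) + (ε + (Δl + Δm))
    have h1 : ℓ (min s t) ≤ ℓ (min u t) :=
      hM.mono' (le_min (by linarith) (by linarith)) (min_le_min hsu le_rfl)
    have h2 := (hLS t ht).1
    rw [stopAt, stopAt] at h2
    have h3 : m (min u (t + ε)) ≤ m (min s (t + ε)) + Δm := key_stop hMn hs hsu (by linarith)
    have h4 : m (min s (t + ε)) ≤ m (min s (t + (ε + (Δl + Δm)))) :=
      hMn.mono' (le_min (by linarith) (by linarith)) (min_le_min le_rfl (by linarith))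
    linarith
  · show m (min s (t - (ε + (Δl + Δm)))) - (ε + (Δl + Δm)) ≤ ℓ (min s t)
    have h1 : m (min s (t - (ε + (Δl + Δm)))) ≤ m (min u (t - ε)) :=
      hMn.mono' (le_min (by linarith) (by linarith)) (min_le_min hsu (by linarith))
    have h2 := (hLS t ht).2
    rw [stopAt, stopAt] at h2
    have h3 : ℓ (min u t) ≤ ℓ (min s t) + Δl := key_stop hM hs hsu (by linarith)
    linarith

lemma min_sInf_le_of_transport {S1 S2 : Set ℝ} {Δ : ℝ} (hΔ0 : 0 ≤ Δ)
    (h1ne : S1.Nonempty)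
    (htrans : ∀ ε ∈ S1, ε < 1 → ε + Δ ≤ 1 → ε + Δ ∈ S2)
    (hS2bdd : BddBelow S2) :
    min (sInf S2) 1 ≤ min (sInf S1) 1 + Δ := by
  rcases le_or_gt 1 (sInf S1) with hc | hc
  · calc min (sInf S2) 1 ≤ 1 := min_le_right _ _
      _ ≤ min (sInf S1) 1 + Δ := by rw [min_eq_right hc]; linarith
  · rw [min_eq_left hc.le]
    by_contra hcon
    push_neg at hcon
    set g2 := min (sInf S2) 1 with hg2
    have hg2le1 : g2 ≤ 1 := min_le_right _ _
    set ρ := min ((sInf S1 + 1)/2) (sInf S1 + (g2 - sInf S1 - Δ)/2) with hρ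
    have hρ1 : sInf S1 < ρ := lt_min (by linarith) (by linarith)
    have hρ2 : ρ < 1 := lt_of_le_of_lt (min_le_left _ _) (by linarith)
    have hρle : ρ ≤ sInf S1 + (g2 - sInf S1 - Δ)/2 := min_le_right _ _
    obtain ⟨ε, hεm, hερ⟩ := exists_lt_of_csInf_lt h1ne hρ1
    rcases le_or_gt (ε + Δ) 1 with hc2 | hc2
    · have h5 : sInf S2 ≤ ε + Δ := csInf_le hS2bdd (htrans ε hεm (by linarith) hc2)
      have h6 : g2 ≤ ε + Δ := le_trans (min_le_left _ _) h5
      linarith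
    · linarith

/-- the truncated Lévy distance of stopped paths. -/
def gly (m ℓ : ℝ → ℝ) (s : ℝ) : ℝ := min (levyDist (stopAt m s) (stopAt ℓ s)) 1

lemma gly_nonneg (hMn : MemM m) (hM : MemM ℓ) {s : ℝ} (hs : 0 < s) : 0 ≤ gly m ℓ s :=
  le_min (Real.sInf_nonneg (fun ε hε => hε.1.le)) zero_le_one

lemma gly_le_one : gly m ℓ s ≤ 1 := min_le_right _ _

lemma gly_var (hMn : MemM m) (hM : MemM ℓ) {s u : ℝ} (hs : 0 < s) (hsu : s ≤ u) :
    |gly m ℓ u - gly m ℓ s| ≤ (ℓ u - ℓ s) + (m u - m s) := by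
  set Δ := (ℓ u - ℓ s) + (m u - m s) with hΔ
  have hΔ0 : 0 ≤ Δ := by
    rw [hΔ]
    have := hM.mono' (by linarith : (-1:ℝ) ≤ s) hsu
    have := hMn.mono' (by linarith : (-1:ℝ) ≤ s) hsu
    linarith
  have hu : 0 < u := lt_of_lt_of_le hs hsu
  rw [abs_le]
  constructor
  · have := min_sInf_le_of_transport (S1 := LS (stopAt m u) (stopAt ℓ u))
      (S2 := LS (stopAt m s) (stopAt ℓ s)) hΔ0 (LS_nonempty hMn hM hu)
      (fun ε hε hε1 hε'1 => LS_transport_down hMn hM hs hsu hε1.le hε'1 hε)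
      (LS_bddBelow _ _)
    rw [gly, gly, levyDist_eq_LS, levyDist_eq_LS]
    linarith
  · have := min_sInf_le_of_transport (S1 := LS (stopAt m s) (stopAt ℓ s))
      (S2 := LS (stopAt m u) (stopAt ℓ u)) hΔ0 (LS_nonempty hMn hM hs)
      (fun ε hε hε1 hε'1 => LS_transport_up hMn hM hs hsu hε1.le hε'1 hε)
      (LS_bddBelow _ _)
    rw [gly, gly, levyDist_eq_LS, levyDist_eq_LS]
    linarith

/-- a measurable version of `gly` on `Ioi 0`. -/
lemma measurable_gly (hMn : MemM m) (hM : MemM ℓ) :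
    ∃ gm : ℝ → ℝ, Measurable gm ∧ (∀ s, 0 < s → gm s = gly m ℓ s) ∧
      (∀ s, 0 ≤ gm s ∧ gm s ≤ 1) := by
  classical
  set D := fun u => eb ℓ u + eb m u with hD
  set P := fun u => if 0 < u then gly m ℓ u + D u else 0 with hP
  have hDmono : Monotone D := fun a b hab => add_le_add (hM.eb_mono hab) (hMn.eb_mono hab)
  have hPnonneg : ∀ u, 0 ≤ P u := by
    intro u
    show (0:ℝ) ≤ if 0 < u then gly m ℓ u + D u else 0
    split_ifs with h
    · have h1 := gly_nonneg hMn hM h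
      have h2 := hM.eb_nonneg u
      have h3 := hMn.eb_nonneg u
      show 0 ≤ gly m ℓ u + (eb ℓ u + eb m u)
      linarith
    · exact le_refl 0
  have hPmono : Monotone P := by
    intro a b hab
    show (if 0 < a then gly m ℓ a + D a else 0) ≤ (if 0 < b then gly m ℓ b + D b else 0)
    split_ifs with h1 h2 h2
    · have hvar := (abs_le.1 (gly_var hMn hM h1 hab)).1
      have e1 : eb ℓ a = ℓ a := eb_eq (by linarith)
      have e2 : eb ℓ b = ℓ b := eb_eq (by linarith [lt_of_lt_of_le h1 hab])
      have e3 : eb m a = m a := eb_eq (by linarith)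
      have e4 : eb m b = m b := eb_eq (by linarith [lt_of_lt_of_le h1 hab])
      show gly m ℓ a + (eb ℓ a + eb m a) ≤ gly m ℓ b + (eb ℓ b + eb m b)
      rw [e1, e2, e3, e4]
      linarith
    · exact absurd (lt_of_lt_of_le h1 hab) h2
    · simpa only [hP, if_pos h2] using hPnonneg b
    · exact le_rfl
  refine ⟨fun u => max 0 (min 1 (P u - D u)), ?_, ?_, ?_⟩
  · exact measurable_const.max (measurable_const.min
      (hPmono.measurable.sub hDmono.measurable))
  · intro s hs
    have hg0 := gly_nonneg hMn hM hs
    have hg1 := gly_le_one (m := m) (ℓ := ℓ) (s := s)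
    have hPs : P s - D s = gly m ℓ s := by
      show (if 0 < s then gly m ℓ s + D s else 0) - D s = gly m ℓ s
      rw [if_pos hs]; ring
    show max 0 (min 1 (P s - D s)) = gly m ℓ s
    rw [hPs, min_eq_right hg1, max_eq_right hg0]
  · intro s
    constructor
    · exact le_max_left _ _
    · exact max_le zero_le_one (min_le_left _ _)

lemma integrable_exp_gly (hMn : MemM m) (hM : MemM ℓ) :
    IntegrableOn (fun s => Real.exp (-s) * gly m ℓ s) (Set.Ioi (0:ℝ)) := by
  obtain ⟨gm, hgm_meas, hgm_eq, hgm_bd⟩ := measurable_gly hMn hM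
  have hexp : IntegrableOn (fun s => Real.exp (-s)) (Set.Ioi (0:ℝ)) := by
    have := exp_neg_integrableOn_Ioi (0:ℝ) (one_pos)
    refine this.congr_fun (fun x _ => by simp only [neg_one_mul]) measurableSet_Ioi
  have hint : IntegrableOn (fun s => Real.exp (-s) * gm s) (Set.Ioi (0:ℝ)) := by
    refine Integrable.mono' hexp ?_ ?_
    · exact ((Real.measurable_exp.comp measurable_neg).mul hgm_meas).aestronglyMeasurable
    · refine Filter.Eventually.of_forall (fun s => ?_)
      rw [Real.norm_eq_abs, abs_mul, abs_of_pos (Real.exp_pos _),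
        abs_of_nonneg (hgm_bd s).1]
      nlinarith [Real.exp_pos (-s), (hgm_bd s).1, (hgm_bd s).2]
  exact hint.congr_fun (fun x hx => by simp only [hgm_eq x hx]) measurableSet_Ioi

lemma dHat_eq_gly : dHat m ℓ = ∫ s in Set.Ioi (0:ℝ), Real.exp (-s) * gly m ℓ s := rfl

/-- Markov inequality for the bad set of Lévy distances. -/
lemma markov_gly (hMn : MemM m) (hM : MemM ℓ) {T₀ γ : ℝ} (hT₀ : 0 < T₀) (hγ : 0 < γ) :
    (volume {T | T ∈ Set.Ioc (0:ℝ) T₀ ∧ γ < gly m ℓ (T + 1)}).toReal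
      ≤ Real.exp (T₀ + 1) / γ * dHat m ℓ := by
  obtain ⟨gm, hgm_meas, hgm_eq, hgm_bd⟩ := measurable_gly hMn hM
  set f := fun s => Real.exp (-s) * gly m ℓ s with hf
  set ε := γ * Real.exp (-(T₀ + 1)) with hε
  have hε0 : 0 < ε := mul_pos hγ (Real.exp_pos _)
  set A := {s | s ∈ Set.Ioc (1:ℝ) (T₀ + 1) ∧ γ < gm s} with hA
  have hAmeas : MeasurableSet A :=
    (measurableSet_Ioc.inter (measurableSet_lt measurable_const hgm_meas)).congr
      (by ext s; simp [hA, Set.mem_setOf_eq, Set.mem_inter_iff]; tauto)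
  have hBad : {T | T ∈ Set.Ioc (0:ℝ) T₀ ∧ γ < gly m ℓ (T + 1)} = (fun T => T + 1) ⁻¹' A := by
    ext T
    simp only [hA, Set.mem_setOf_eq, Set.mem_preimage, Set.mem_Ioc]
    constructor
    · rintro ⟨⟨h1, h2⟩, h3⟩
      exact ⟨⟨by linarith, by linarith⟩, by rw [hgm_eq _ (by linarith)]; exact h3⟩
    · rintro ⟨⟨h1, h2⟩, h3⟩
      rw [hgm_eq _ (by linarith)] at h3
      exact ⟨⟨by linarith, by linarith⟩, h3⟩
  have hvol : volume {T | T ∈ Set.Ioc (0:ℝ) T₀ ∧ γ < gly m ℓ (T + 1)} = volume A := by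
    rw [hBad]; exact measure_preimage_add_right volume 1 A
  set μ'' := volume.restrict (Set.Ioc (1:ℝ) (T₀ + 1)) with hμ''
  have hint' : Integrable f μ'' := by
    refine (integrable_exp_gly hMn hM).mono_set ?_ |>.mono_measure ?_
    · exact fun x hx => lt_trans one_pos hx.1
    · exact le_rfl
  have hnn : 0 ≤ᶠ[ae μ''] f := by
    refine (ae_restrict_iff' measurableSet_Ioc).2 (Filter.Eventually.of_forall (fun s hs => ?_))
    exact mul_nonneg (Real.exp_pos _).le (gly_nonneg hMn hM (by linarith [hs.1]))
  have hmarkov := mul_meas_ge_le_integral_of_nonneg hnn hint' ε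
  have hsub : A ⊆ {x | ε ≤ f x} := by
    intro s hs
    have h1 : Real.exp (-(T₀+1)) ≤ Real.exp (-s) := Real.exp_le_exp.2 (by linarith [hs.1.2])
    have h2 : γ ≤ gly m ℓ s := by rw [← hgm_eq s (by linarith [hs.1.1])]; exact hs.2.le
    show ε ≤ Real.exp (-s) * gly m ℓ s
    rw [hε]
    calc γ * Real.exp (-(T₀+1)) ≤ gly m ℓ s * Real.exp (-s) := by
          refine mul_le_mul h2 h1 (Real.exp_pos _).le ?_
          exact le_trans hγ.le h2
      _ = Real.exp (-s) * gly m ℓ s := mul_comm _ _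
  have hfin : μ'' {x | ε ≤ f x} ≠ ⊤ := by
    have h1 : μ'' {x | ε ≤ f x} ≤ μ'' Set.univ := measure_mono (Set.subset_univ _)
    rw [hμ'', Measure.restrict_apply_univ] at h1
    exact ne_of_lt (lt_of_le_of_lt h1 (by rw [Real.volume_Ioc]; exact ENNReal.ofReal_lt_top))
  have hA'' : μ'' A = volume A := by
    rw [hμ'', Measure.restrict_apply hAmeas]
    congr 1
    exact Set.inter_eq_left.2 (fun x hx => hx.1)
  have hμle : (μ'' A).toReal ≤ (μ'' {x | ε ≤ f x}).toReal :=
    ENNReal.toReal_mono hfin (measure_mono hsub)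
  have hII : ∫ x, f x ∂μ'' ≤ dHat m ℓ := by
    rw [dHat_eq_gly]
    refine setIntegral_mono_set (integrable_exp_gly hMn hM) ?_ ?_
    · refine (ae_restrict_iff' measurableSet_Ioi).2 (Filter.Eventually.of_forall (fun s hs => ?_))
      exact mul_nonneg (Real.exp_pos _).le (gly_nonneg hMn hM hs)
    · exact (show Set.Ioc (1:ℝ) (T₀+1) ⊆ Set.Ioi 0 from
        fun x hx => lt_trans one_pos hx.1).eventuallyLE
  rw [← hvol] at hA''
  rw [← hA''] at hvol
  have : ε * (volume {T | T ∈ Set.Ioc (0:ℝ) T₀ ∧ γ < gly m ℓ (T + 1)}).toReal ≤ dHat m ℓ := by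
    calc ε * (volume {T | T ∈ Set.Ioc (0:ℝ) T₀ ∧ γ < gly m ℓ (T + 1)}).toReal
        = ε * (μ'' A).toReal := by rw [hA'']
      _ ≤ ε * (μ'' {x | ε ≤ f x}).toReal := by
          exact mul_le_mul_of_nonneg_left hμle hε0.le
      _ ≤ ∫ x, f x ∂μ'' := hmarkov
      _ ≤ dHat m ℓ := hII
  have hεinv : Real.exp (T₀ + 1) / γ = 1 / ε := by
    rw [hε, one_div, mul_inv, ← Real.exp_neg, neg_neg]
    ring
  rw [hεinv, one_div, inv_mul_eq_div]
  exact (le_div_iff₀ hε0).2 (by rw [mul_comm]; exact this)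

/-- Markov inequality for the oscillation bad set. -/
lemma markov_osc (hM : MemM ℓ) {T₀ a β : ℝ} (hT₀ : 2 ≤ T₀) (ha : 0 < a) (ha1 : a ≤ 1)
    (hβ : 0 < β) :
    (volume {T | T ∈ Set.Ioc (0:ℝ) T₀ ∧ β < eb ℓ (T + a) - eb ℓ (T - a)}).toReal
      ≤ 2 * a / β := by
  set w := fun T => eb ℓ (T + a) - eb ℓ (T - a) with hw
  have hm1 : Monotone (fun T => eb ℓ (T + a)) := fun x y h => hM.eb_mono (by linarith)
  have hm2 : Monotone (fun T => eb ℓ (T - a)) := fun x y h => hM.eb_mono (by linarith)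
  have hw_meas : Measurable w := hm1.measurable.sub hm2.measurable
  have hw_bd : ∀ T, 0 ≤ w T ∧ w T ≤ 1 := fun T =>
    ⟨sub_nonneg.2 (hM.eb_mono (by linarith)), by
      have h1 := hM.eb_le_one (T + a)
      have h2 := hM.eb_nonneg (T - a)
      show eb ℓ (T + a) - eb ℓ (T - a) ≤ 1
      linarith⟩
  set μ' := volume.restrict (Set.Ioc (0:ℝ) T₀) with hμ'
  have hint : Integrable w μ' := by
    refine Integrable.mono' (g := fun _ => (1:ℝ)) ?_ hw_meas.aestronglyMeasurable ?_
    · exact integrableOn_const (μ := volume) (s := Set.Ioc (0:ℝ) T₀) (by rw [Real.volume_Ioc]; exact ENNReal.ofReal_ne_top)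
    · exact Filter.Eventually.of_forall (fun T => by
        rw [Real.norm_eq_abs, abs_of_nonneg (hw_bd T).1]; exact (hw_bd T).2)
  have hmark := mul_meas_ge_le_integral_of_nonneg
    (Filter.Eventually.of_forall (fun T => (hw_bd T).1) : 0 ≤ᶠ[ae μ'] w) hint β
  -- compute/bound the integral
  have hIoc : ∫ T, w T ∂μ' = ∫ T in (0:ℝ)..T₀, w T := by
    rw [hμ', intervalIntegral.integral_of_le (by linarith : (0:ℝ) ≤ T₀)]
  have hsub1 : ∫ T in (0:ℝ)..T₀, w T = (∫ T in (0:ℝ)..T₀, eb ℓ (T + a))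
      - ∫ T in (0:ℝ)..T₀, eb ℓ (T - a) :=
    intervalIntegral.integral_sub hm1.intervalIntegrable hm2.intervalIntegrable
  have hshift1 : ∫ T in (0:ℝ)..T₀, eb ℓ (T + a) = ∫ T in a..(T₀ + a), eb ℓ T := by
    have := intervalIntegral.integral_comp_add_right (a := (0:ℝ)) (b := T₀)
      (fun T => eb ℓ T) a
    simpa using this
  have hshift2 : ∫ T in (0:ℝ)..T₀, eb ℓ (T - a) = ∫ T in (-a)..(T₀ - a), eb ℓ T := by
    have h0 : (fun T : ℝ => eb ℓ (T - a)) = fun T => eb ℓ (T + (-a)) := by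
      funext T; rw [sub_eq_add_neg]
    rw [h0]
    have := intervalIntegral.integral_comp_add_right (a := (0:ℝ)) (b := T₀)
      (fun T => eb ℓ T) (-a)
    simpa [sub_eq_add_neg] using this
  have hebint : ∀ b c : ℝ, IntervalIntegrable (eb ℓ) volume b c := fun b c =>
    hM.eb_mono.intervalIntegrable
  have hadj1 : (∫ T in a..(T₀ - a), eb ℓ T) + ∫ T in (T₀ - a)..(T₀ + a), eb ℓ T
      = ∫ T in a..(T₀ + a), eb ℓ T :=
    intervalIntegral.integral_add_adjacent_intervals (hebint _ _) (hebint _ _)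
  have hadj2 : (∫ T in (-a)..a, eb ℓ T) + ∫ T in a..(T₀ - a), eb ℓ T
      = ∫ T in (-a)..(T₀ - a), eb ℓ T :=
    intervalIntegral.integral_add_adjacent_intervals (hebint _ _) (hebint _ _)
  have hup : ∫ T in (T₀ - a)..(T₀ + a), eb ℓ T ≤ 2 * a := by
    have := intervalIntegral.integral_mono_on (by linarith : T₀ - a ≤ T₀ + a)
      (hebint _ _) (intervalIntegrable_const (c := (1:ℝ)))
      (fun x _ => hM.eb_le_one x)
    rw [intervalIntegral.integral_const, smul_eq_mul, mul_one] at this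
    linarith
  have hlo : 0 ≤ ∫ T in (-a)..a, eb ℓ T :=
    intervalIntegral.integral_nonneg (by linarith) (fun u _ => hM.eb_nonneg u)
  have hIw : ∫ T, w T ∂μ' ≤ 2 * a := by
    rw [hIoc, hsub1, hshift1, hshift2]
    linarith
  -- bad set vs level set
  set B := {T | T ∈ Set.Ioc (0:ℝ) T₀ ∧ β < w T} with hB
  have hBmeas : MeasurableSet B :=
    (measurableSet_Ioc.inter (measurableSet_lt measurable_const hw_meas)).congr
      (by ext T; simp [hB, Set.mem_setOf_eq, Set.mem_inter_iff]; tauto)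
  have hBsub : B ⊆ {x | β ≤ w x} := fun T hT => hT.2.le
  have hfin : μ' {x | β ≤ w x} ≠ ⊤ := by
    have h1 : μ' {x | β ≤ w x} ≤ μ' Set.univ := measure_mono (Set.subset_univ _)
    rw [hμ', Measure.restrict_apply_univ] at h1
    exact ne_of_lt (lt_of_le_of_lt h1 (by rw [Real.volume_Ioc]; exact ENNReal.ofReal_lt_top))
  have hμB : μ' B = volume B := by
    rw [hμ', Measure.restrict_apply hBmeas]
    congr 1
    exact Set.inter_eq_left.2 (fun x hx => hx.1)
  have h5 : (volume B).toReal ≤ (μ' {x | β ≤ w x}).toReal := by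
    rw [← hμB]
    exact ENNReal.toReal_mono hfin (measure_mono hBsub)
  have h6 : β * (volume B).toReal ≤ 2 * a := by
    calc β * (volume B).toReal ≤ β * (μ' {x | β ≤ w x}).toReal :=
          mul_le_mul_of_nonneg_left h5 hβ.le
      _ ≤ ∫ T, w T ∂μ' := hmark
      _ ≤ 2 * a := hIw
  rw [le_div_iff₀ hβ]
  calc (volume B).toReal * β = β * (volume B).toReal := mul_comm _ _
    _ ≤ 2 * a := h6

lemma integrableOn_exp_neg : IntegrableOn (fun s : ℝ => Real.exp (-s)) (Set.Ioi (0:ℝ)) := by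
  have := exp_neg_integrableOn_Ioi (0:ℝ) (one_pos)
  exact this.congr_fun (fun x _ => by simp only [neg_one_mul]) measurableSet_Ioi

lemma measurableSet_bad1 (hMn : MemM m) (hM : MemM ℓ) (T₀ γ : ℝ) :
    MeasurableSet {T | T ∈ Set.Ioc (0:ℝ) T₀ ∧ γ < gly m ℓ (T + 1)} := by
  obtain ⟨gm, hgm_meas, hgm_eq, _⟩ := measurable_gly hMn hM
  have he : {T | T ∈ Set.Ioc (0:ℝ) T₀ ∧ γ < gly m ℓ (T + 1)} =
      Set.Ioc (0:ℝ) T₀ ∩ (fun T => gm (T + 1)) ⁻¹' (Set.Ioi γ) := by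
    ext T
    simp only [Set.mem_setOf_eq, Set.mem_inter_iff, Set.mem_preimage, Set.mem_Ioi]
    constructor
    · rintro ⟨h1, h2⟩
      exact ⟨h1, by rw [hgm_eq _ (by linarith [h1.1])]; exact h2⟩
    · rintro ⟨h1, h2⟩
      rw [hgm_eq _ (by linarith [h1.1])] at h2
      exact ⟨h1, h2⟩
  rw [he]
  exact measurableSet_Ioc.inter
    ((hgm_meas.comp (measurable_id.add measurable_const)) measurableSet_Ioi)

lemma measurableSet_bad2 (hM : MemM ℓ) (T₀ a β : ℝ) :
    MeasurableSet {T | T ∈ Set.Ioc (0:ℝ) T₀ ∧ β < eb ℓ (T + a) - eb ℓ (T - a)} := by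
  have hm1 : Monotone (fun T => eb ℓ (T + a)) := fun x y h => hM.eb_mono (by linarith)
  have hm2 : Monotone (fun T => eb ℓ (T - a)) := fun x y h => hM.eb_mono (by linarith)
  have he : {T | T ∈ Set.Ioc (0:ℝ) T₀ ∧ β < eb ℓ (T + a) - eb ℓ (T - a)} =
      Set.Ioc (0:ℝ) T₀ ∩ (fun T => eb ℓ (T + a) - eb ℓ (T - a)) ⁻¹' (Set.Ioi β) := by
    ext T; simp [Set.mem_setOf_eq, Set.mem_inter_iff]
  rw [he]
  exact measurableSet_Ioc.inter ((hm1.measurable.sub hm2.measurable) measurableSet_Ioi)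

/-- the per-`n` quantitative bound on `m1Dist`. -/
lemma m1Dist_le_bound (hM : MemM ℓ) (hMn : MemM m)
    (hf : ContinuousOn f (Set.Ici (-1:ℝ))) (hfn : ContinuousOn fn (Set.Ici (-1:ℝ)))
    (hG : ContinuousOn G (Set.Icc (-1:ℝ) 1)) (hGm : MonotoneOn G (Set.Icc (-1:ℝ) 1))
    {T₀ γ β η₁ : ℝ} (hT₀ : 2 ≤ T₀) (hγ0 : 0 < γ) (hγ14 : γ ≤ 1/4) (hβ0 : 0 < β)
    (hη₁0 : 0 < η₁)
    (hF : ∀ t ∈ Set.Icc (-1:ℝ) T₀, |fn t - f t| ≤ η₁/3)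
    (hAf : ∀ r r', r ∈ Set.Icc (-1:ℝ) T₀ → r' ∈ Set.Icc (-1:ℝ) T₀ →
      |r - r'| ≤ 12*γ + 4*β → |f r - f r'| ≤ η₁/3)
    (hAg : ∀ v v', v ∈ Set.Icc (0:ℝ) 1 → v' ∈ Set.Icc (0:ℝ) 1 →
      |v - v'| ≤ 12*γ + 4*β → |G v - G v'| ≤ η₁/3)
    (hκ : 12*γ + 4*β ≤ η₁) :
    m1Dist (xpath G fn m) (xpath G f ℓ) ≤ η₁ +
      ((volume {T | T ∈ Set.Ioc (0:ℝ) T₀ ∧ γ < gly m ℓ (T + 1)}).toReal +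
       (volume {T | T ∈ Set.Ioc (0:ℝ) T₀ ∧ β < eb ℓ (T + 2*γ) - eb ℓ (T - 2*γ)}).toReal) +
      Real.exp (-T₀) := by
  classical
  set B1 := {T | T ∈ Set.Ioc (0:ℝ) T₀ ∧ γ < gly m ℓ (T + 1)} with hB1
  set B2 := {T | T ∈ Set.Ioc (0:ℝ) T₀ ∧ β < eb ℓ (T + 2*γ) - eb ℓ (T - 2*γ)} with hB2
  have hB1m : MeasurableSet B1 := measurableSet_bad1 hMn hM T₀ γ
  have hB2m : MeasurableSet B2 := measurableSet_bad2 hM T₀ (2*γ) β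
  set Bad := B1 ∪ B2 with hBad
  have hBadm : MeasurableSet Bad := hB1m.union hB2m
  -- the good-set estimate
  have hgood : ∀ T ∈ Set.Ioc (0:ℝ) T₀, T ∉ Bad →
      m1DistOn (-1) T (xpath G fn m) (xpath G f ℓ) ≤ η₁ := by
    intro T hT hTn
    rw [hBad, Set.mem_union] at hTn
    push_neg at hTn
    obtain ⟨hTn1, hTn2⟩ := hTn
    have hg1 : gly m ℓ (T + 1) ≤ γ := by
      by_contra hcon
      exact hTn1 ⟨hT, by push_neg at hcon; linarith⟩
    have hg2 : eb ℓ (T + 2*γ) - eb ℓ (T - 2*γ) ≤ β := by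
      by_contra hcon
      exact hTn2 ⟨hT, by push_neg at hcon; linarith⟩
    obtain ⟨ε, hεm, hε2γ⟩ := exists_LS_lt hMn hM (by linarith [hT.1] : (0:ℝ) < T + 1)
      hγ0 hg1 (by linarith)
    have hε0 : 0 < ε := hεm.1
    have hε1 : ε < 1 := by linarith
    obtain ⟨hA, hB, hδ'⟩ := LS_props hMn hM hT.1 hε1 hεm
    set δ := β + 2*γ with hδdef
    have hδ0 : 0 ≤ δ := by rw [hδdef]; linarith
    have hδb : |m T - ℓ T| ≤ δ := by
      have h1 : eb ℓ (T + ε) ≤ eb ℓ (T + 2*γ) := hM.eb_mono (by linarith)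
      have h2 : eb ℓ (T - 2*γ) ≤ eb ℓ (T - ε) := hM.eb_mono (by linarith)
      rw [hδdef]
      linarith
    have := m1DistOn_le hM hMn hf hfn hG hGm hT.1 hε0 hδ0 hA hB hδb
      (fun t ht => hF t ⟨ht.1, le_trans ht.2 hT.2⟩)
      (fun r r' h1 h2 h3 => hAf r r' ⟨h1.1, le_trans h1.2 hT.2⟩ ⟨h2.1, le_trans h2.2 hT.2⟩
        (le_trans h3 (by rw [hδdef]; linarith)))
      (fun v v' h1 h2 h3 => hAg v v' h1 h2 (le_trans h3 (by rw [hδdef]; linarith)))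
    refine le_trans this (max_le ?_ ?_)
    · linarith
    · rw [hδdef]; linarith
  -- majorant
  set ψ := fun T => η₁ * Real.exp (-T) + Bad.indicator (fun T => Real.exp (-T)) T
    + (Set.Ioi T₀).indicator (fun T => Real.exp (-T)) T with hψ
  have hψint : IntegrableOn ψ (Set.Ioi (0:ℝ)) := by
    refine (((integrableOn_exp_neg.const_mul η₁).add ?_).add ?_)
    · exact integrableOn_exp_neg.indicator hBadm
    · exact integrableOn_exp_neg.indicator measurableSet_Ioi
  have hpt : ∀ T ∈ Set.Ioi (0:ℝ),
      Real.exp (-T) * min (m1DistOn (-1) T (xpath G fn m) (xpath G f ℓ)) 1 ≤ ψ T := by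
    intro T hT
    have hexp0 := (Real.exp_pos (-T)).le
    have hmin0 : 0 ≤ min (m1DistOn (-1) T (xpath G fn m) (xpath G f ℓ)) 1 :=
      le_min (m1DistOn_nonneg _ _ _ _) zero_le_one
    have hmin1 : min (m1DistOn (-1) T (xpath G fn m) (xpath G f ℓ)) 1 ≤ 1 := min_le_right _ _
    have hind1 : 0 ≤ Bad.indicator (fun T => Real.exp (-T)) T :=
      Set.indicator_nonneg (fun x _ => (Real.exp_pos _).le) T
    have hind2 : 0 ≤ (Set.Ioi T₀).indicator (fun T => Real.exp (-T)) T :=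
      Set.indicator_nonneg (fun x _ => (Real.exp_pos _).le) T
    rcases le_or_gt T T₀ with hc1 | hc1
    · by_cases hbad : T ∈ Bad
      · have he1 : Bad.indicator (fun T => Real.exp (-T)) T = Real.exp (-T) :=
          Set.indicator_of_mem hbad _
        show _ ≤ η₁ * Real.exp (-T) + Bad.indicator (fun T => Real.exp (-T)) T
          + (Set.Ioi T₀).indicator (fun T => Real.exp (-T)) T
        rw [he1]
        nlinarith [mul_le_mul_of_nonneg_left hmin1 hexp0]
      · have h1 := hgood T ⟨hT, hc1⟩ hbad
        have h2 : min (m1DistOn (-1) T (xpath G fn m) (xpath G f ℓ)) 1 ≤ η₁ :=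
          le_trans (min_le_left _ _) h1
        show _ ≤ η₁ * Real.exp (-T) + Bad.indicator (fun T => Real.exp (-T)) T
          + (Set.Ioi T₀).indicator (fun T => Real.exp (-T)) T
        nlinarith [mul_le_mul_of_nonneg_left h2 hexp0]
    · have he1 : (Set.Ioi T₀).indicator (fun T => Real.exp (-T)) T = Real.exp (-T) :=
        Set.indicator_of_mem hc1 _
      show _ ≤ η₁ * Real.exp (-T) + Bad.indicator (fun T => Real.exp (-T)) T
        + (Set.Ioi T₀).indicator (fun T => Real.exp (-T)) T
      rw [he1]
      nlinarith [mul_le_mul_of_nonneg_left hmin1 hexp0]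
  -- integral bound
  have hm1 : m1Dist (xpath G fn m) (xpath G f ℓ) ≤ ∫ T in Set.Ioi (0:ℝ), ψ T := by
    rw [m1Dist]
    refine integral_mono_of_nonneg ?_ hψint ?_
    · exact (ae_restrict_iff' measurableSet_Ioi).2 (Filter.Eventually.of_forall
        (fun T hT => mul_nonneg (Real.exp_pos _).le
          (le_min (m1DistOn_nonneg _ _ _ _) zero_le_one)))
    · exact (ae_restrict_iff' measurableSet_Ioi).2 (Filter.Eventually.of_forall hpt)
  -- evaluate the majorant integral
  have hI1 : ∫ T in Set.Ioi (0:ℝ), η₁ * Real.exp (-T) = η₁ := by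
    rw [integral_const_mul, integral_exp_neg_Ioi, neg_zero, Real.exp_zero, mul_one]
  have hBsub : Bad ⊆ Set.Ioc (0:ℝ) T₀ := by rintro T (h | h) <;> exact h.1
  have hvolB1fin : volume B1 ≠ ⊤ := by
    refine ne_of_lt (lt_of_le_of_lt (measure_mono (fun T (h : T ∈ B1) => h.1)) ?_)
    rw [Real.volume_Ioc]; exact ENNReal.ofReal_lt_top
  have hvolB2fin : volume B2 ≠ ⊤ := by
    refine ne_of_lt (lt_of_le_of_lt (measure_mono (fun T (h : T ∈ B2) => h.1)) ?_)
    rw [Real.volume_Ioc]; exact ENNReal.ofReal_lt_top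
  have hvolBfin : volume Bad ≠ ⊤ := by
    refine ne_of_lt (lt_of_le_of_lt (measure_mono hBsub) ?_)
    rw [Real.volume_Ioc]; exact ENNReal.ofReal_lt_top
  have hind1int : Integrable (Bad.indicator (fun _ => (1:ℝ)))
      (volume.restrict (Set.Ioi (0:ℝ))) := by
    rw [integrable_indicator_iff hBadm]
    refine integrableOn_const (μ := volume.restrict (Set.Ioi (0:ℝ))) (s := Bad) (ne_of_lt ?_)
    exact lt_of_le_of_lt (le_trans (Measure.restrict_apply_le _ _) (measure_mono hBsub))
      (by rw [Real.volume_Ioc]; exact ENNReal.ofReal_lt_top)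
  have hI2 : ∫ T in Set.Ioi (0:ℝ), Bad.indicator (fun T => Real.exp (-T)) T
      ≤ (volume B1).toReal + (volume B2).toReal := by
    have hle : ∫ T in Set.Ioi (0:ℝ), Bad.indicator (fun T => Real.exp (-T)) T
        ≤ ∫ T in Set.Ioi (0:ℝ), Bad.indicator (fun _ => (1:ℝ)) T := by
      refine integral_mono_of_nonneg ?_ hind1int ?_
      · exact Filter.Eventually.of_forall (fun T =>
          Set.indicator_nonneg (fun x _ => (Real.exp_pos _).le) T)
      · refine (ae_restrict_iff' measurableSet_Ioi).2 (Filter.Eventually.of_forall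
          (fun T hT => ?_))
        refine Set.indicator_le_indicator ?_
        calc Real.exp (-T) ≤ Real.exp 0 := Real.exp_le_exp.2 (by simp at hT ⊢; linarith)
          _ = 1 := Real.exp_zero
    have heval : ∫ T in Set.Ioi (0:ℝ), Bad.indicator (fun _ => (1:ℝ)) T
        = (volume Bad).toReal := by
      rw [integral_indicator hBadm, setIntegral_const, smul_eq_mul, mul_one,
        measureReal_def, Measure.restrict_apply hBadm]
      have he : Bad ∩ Set.Ioi 0 = Bad := Set.inter_eq_left.2 (fun x hx => (hBsub hx).1)
      rw [he]
    have hsum : (volume Bad).toReal ≤ (volume B1).toReal + (volume B2).toReal := by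
      have h1 := measure_union_le (μ := volume) B1 B2
      have h2 : (volume Bad).toReal ≤ (volume B1 + volume B2).toReal :=
        ENNReal.toReal_mono (by
          exact ENNReal.add_ne_top.2 ⟨hvolB1fin, hvolB2fin⟩) h1
      rwa [ENNReal.toReal_add hvolB1fin hvolB2fin] at h2
    linarith [hle, heval ▸ hle]
  have hI3 : ∫ T in Set.Ioi (0:ℝ), (Set.Ioi T₀).indicator (fun T => Real.exp (-T)) T
      = Real.exp (-T₀) := by
    rw [integral_indicator measurableSet_Ioi]
    have hrr : (volume.restrict (Set.Ioi (0:ℝ))).restrict (Set.Ioi T₀)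
        = volume.restrict (Set.Ioi T₀) := by
      rw [Measure.restrict_restrict measurableSet_Ioi]
      have he : Set.Ioi T₀ ∩ Set.Ioi 0 = Set.Ioi T₀ :=
        Set.inter_eq_left.2 (fun x hx => lt_trans (by linarith : (0:ℝ) < T₀) hx)
      rw [he]
    show ∫ T, Real.exp (-T) ∂((volume.restrict (Set.Ioi (0:ℝ))).restrict (Set.Ioi T₀))
      = Real.exp (-T₀)
    rw [hrr]
    exact integral_exp_neg_Ioi T₀
  have hψeval : ∫ T in Set.Ioi (0:ℝ), ψ T ≤ η₁ +
      ((volume B1).toReal + (volume B2).toReal) + Real.exp (-T₀) := by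
    have hint1 : IntegrableOn (fun T => η₁ * Real.exp (-T)) (Set.Ioi (0:ℝ)) :=
      integrableOn_exp_neg.const_mul η₁
    have hint2 : IntegrableOn (fun T => Bad.indicator (fun T => Real.exp (-T)) T)
        (Set.Ioi (0:ℝ)) := integrableOn_exp_neg.indicator hBadm
    have hint3 : IntegrableOn (fun T => (Set.Ioi T₀).indicator (fun T => Real.exp (-T)) T)
        (Set.Ioi (0:ℝ)) := integrableOn_exp_neg.indicator measurableSet_Ioi
    have hsplit : ∫ T in Set.Ioi (0:ℝ), ψ T =
        (∫ T in Set.Ioi (0:ℝ), η₁ * Real.exp (-T))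
        + (∫ T in Set.Ioi (0:ℝ), Bad.indicator (fun T => Real.exp (-T)) T)
        + ∫ T in Set.Ioi (0:ℝ), (Set.Ioi T₀).indicator (fun T => Real.exp (-T)) T := by
      have h12 : Integrable (fun T => η₁ * Real.exp (-T)
          + Bad.indicator (fun T => Real.exp (-T)) T) (volume.restrict (Set.Ioi (0:ℝ))) :=
        hint1.add hint2
      rw [hψ]
      rw [integral_add h12 hint3, integral_add hint1 hint2]
    rw [hsplit, hI1, hI3]
    linarith [hI2]
  exact le_trans hm1 hψeval

lemma m1Dist_nonneg (x y : ℝ → ℝ) : 0 ≤ m1Dist x y := by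
  rw [m1Dist]
  refine setIntegral_nonneg measurableSet_Ioi (fun t _ => ?_)
  exact mul_nonneg (Real.exp_pos _).le (le_min (m1DistOn_nonneg _ _ _ _) zero_le_one)

end S10

/-- Lemma 4.1 (i): the embedding `ι(f, ℓ) = f − G(ℓ)` from
`Ξ = 𝒞 × 𝕄` (with locally uniform convergence on `𝒞` and `d̂` on `𝕄`) to `𝒟` with the
Skorokhod M1 topology is continuous (stated sequentially, which is equivalent for metric
spaces). -/
theorem stmt10 (G : ℝ → ℝ)
    (hGcont : ContinuousOn G (Set.Icc (-1 : ℝ) 1))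
    (hGmono : MonotoneOn G (Set.Icc (-1 : ℝ) 1)) (hG0 : G 0 = 0)
    (fn : ℕ → ℝ → ℝ) (f : ℝ → ℝ)
    (hfn : ∀ n, ContinuousOn (fn n) (Set.Ici (-1 : ℝ)))
    (hf : ContinuousOn f (Set.Ici (-1 : ℝ)))
    (ℓn : ℕ → ℝ → ℝ) (ℓ : ℝ → ℝ) (hℓn : ∀ n, MemM (ℓn n)) (hℓ : MemM ℓ)
    -- convergence in Ξ: locally uniform convergence of the continuous parts…
    (hfconv : ∀ T : ℝ, TendstoUniformlyOn (fun n t => fn n t) f Filter.atTop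
      (Set.Icc (-1 : ℝ) T))
    -- …and d̂-convergence of the 𝕄-parts
    (hℓconv : Filter.Tendsto (fun n => dHat (ℓn n) ℓ) Filter.atTop (nhds 0)) :
    Filter.Tendsto
      (fun n => m1Dist (fun t => fn n t - G (ℓn n t)) (fun t => f t - G (ℓ t)))
      Filter.atTop (nhds 0) := by

  have hbase : ∀ n, (0:ℝ) ≤ m1Dist (fun t => fn n t - G (ℓn n t))
      (fun t => f t - G (ℓ t)) := fun n => S10.m1Dist_nonneg _ _
  rw [Metric.tendsto_atTop]
  intro η hη
  set η₁ := η / 5 with hη₁def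
  have hη₁0 : 0 < η₁ := div_pos hη (by norm_num)
  set T₀ := max 2 (Real.log (2 / η₁)) with hT₀def
  have hT₀2 : (2:ℝ) ≤ T₀ := le_max_left _ _
  have hexpT₀ : Real.exp (-T₀) < η₁ := by
    have h1 : Real.exp (-T₀) ≤ Real.exp (-(Real.log (2/η₁))) :=
      Real.exp_le_exp.2 (neg_le_neg (le_max_right _ _))
    have h2 : Real.exp (-(Real.log (2/η₁))) = η₁/2 := by
      rw [Real.exp_neg, Real.exp_log (div_pos (by norm_num) hη₁0), inv_div]
    rw [h2] at h1
    linarith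
  have hfc : ContinuousOn f (Set.Icc (-1:ℝ) T₀) := hf.mono (fun x hx => hx.1)
  have hucf := isCompact_Icc.uniformContinuousOn_of_continuous hfc
  rw [Metric.uniformContinuousOn_iff] at hucf
  obtain ⟨ρf, hρf0, hρf⟩ := hucf (η₁/3) (by linarith)
  have hucg := isCompact_Icc.uniformContinuousOn_of_continuous hGcont
  rw [Metric.uniformContinuousOn_iff] at hucg
  obtain ⟨ρg, hρg0, hρg⟩ := hucg (η₁/3) (by linarith)
  set ρ := min (min ρf ρg) (min 1 η₁) with hρdef
  have hρ0 : 0 < ρ := lt_min (lt_min hρf0 hρg0) (lt_min one_pos hη₁0)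
  set β := ρ/8 with hβdef
  have hβ0 : 0 < β := by rw [hβdef]; linarith
  set γ := min (ρ/48) (min (1/4) (β*η₁/4)) with hγdef
  have hγ0 : 0 < γ := lt_min (by linarith) (lt_min (by norm_num)
    (div_pos (mul_pos hβ0 hη₁0) (by norm_num)))
  have hγ14 : γ ≤ 1/4 := le_trans (min_le_right _ _) (min_le_left _ _)
  have hγρ : γ ≤ ρ/48 := min_le_left _ _
  have hγβη : γ ≤ β*η₁/4 := le_trans (min_le_right _ _) (min_le_right _ _)
  have hthresh : 12*γ + 4*β ≤ ρ*3/4 := by rw [hβdef] at *; linarith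
  have hρf' : ρ ≤ ρf := le_trans (min_le_left _ _) (min_le_left _ _)
  have hρg' : ρ ≤ ρg := le_trans (min_le_left _ _) (min_le_right _ _)
  have hρη₁ : ρ ≤ η₁ := le_trans (min_le_right _ _) (min_le_right _ _)
  have hκ : 12*γ + 4*β ≤ η₁ := by linarith
  have hev1 : ∀ᶠ n in Filter.atTop, ∀ t ∈ Set.Icc (-1:ℝ) T₀, dist (f t) (fn n t) < η₁/3 :=
    (Metric.tendstoUniformlyOn_iff.1 (hfconv T₀)) (η₁/3) (by linarith)
  have hev2 : ∀ᶠ n in Filter.atTop, dist (dHat (ℓn n) ℓ) 0 < γ * η₁ * Real.exp (-(T₀+1)) :=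
    Metric.tendsto_nhds.1 hℓconv _ (mul_pos (mul_pos hγ0 hη₁0) (Real.exp_pos _))
  rw [Filter.eventually_atTop] at hev1 hev2
  obtain ⟨N1, hN1⟩ := hev1
  obtain ⟨N2, hN2⟩ := hev2
  refine ⟨max N1 N2, fun n hn => ?_⟩
  have hn1 := hN1 n (le_trans (le_max_left _ _) hn)
  have hn2 := hN2 n (le_trans (le_max_right _ _) hn)
  rw [Real.dist_eq, sub_zero, abs_of_nonneg (hbase n)]
  have hFb : ∀ t ∈ Set.Icc (-1:ℝ) T₀, |fn n t - f t| ≤ η₁/3 := by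
    intro t ht
    have := hn1 t ht
    rw [Real.dist_eq, abs_sub_comm] at this
    exact this.le
  have hAf : ∀ r r', r ∈ Set.Icc (-1:ℝ) T₀ → r' ∈ Set.Icc (-1:ℝ) T₀ →
      |r - r'| ≤ 12*γ + 4*β → |f r - f r'| ≤ η₁/3 := by
    intro r r' h1 h2 h3
    have := hρf r h1 r' h2 (by
      rw [Real.dist_eq]
      exact lt_of_le_of_lt (le_trans h3 hthresh) (by linarith))
    rw [Real.dist_eq] at this
    exact this.le
  have hAg : ∀ v v', v ∈ Set.Icc (0:ℝ) 1 → v' ∈ Set.Icc (0:ℝ) 1 →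
      |v - v'| ≤ 12*γ + 4*β → |G v - G v'| ≤ η₁/3 := by
    intro v v' h1 h2 h3
    have := hρg v ⟨by linarith [h1.1], h1.2⟩ v' ⟨by linarith [h2.1], h2.2⟩ (by
      rw [Real.dist_eq]
      exact lt_of_le_of_lt (le_trans h3 hthresh) (by linarith))
    rw [Real.dist_eq] at this
    exact this.le
  have hbound := S10.m1Dist_le_bound hℓ (hℓn n) hf (hfn n) hGcont hGmono
    hT₀2 hγ0 hγ14 hβ0 hη₁0 hFb hAf hAg hκ
  have hT₀pos : (0:ℝ) < T₀ := by linarith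
  have hmark1 := S10.markov_gly (hℓn n) hℓ hT₀pos hγ0
  have hdHn : dHat (ℓn n) ℓ < γ * η₁ * Real.exp (-(T₀+1)) := by
    rw [Real.dist_eq, sub_zero] at hn2
    exact lt_of_abs_lt hn2
  have hv1 : (volume {T | T ∈ Set.Ioc (0:ℝ) T₀ ∧ γ < S10.gly (ℓn n) ℓ (T + 1)}).toReal
      ≤ η₁ := by
    refine le_trans hmark1 ?_
    have hcoef : 0 < Real.exp (T₀+1) / γ := div_pos (Real.exp_pos _) hγ0
    have h4 : Real.exp (T₀+1)/γ * dHat (ℓn n) ℓ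
        ≤ Real.exp (T₀+1)/γ * (γ * η₁ * Real.exp (-(T₀+1))) :=
      mul_le_mul_of_nonneg_left hdHn.le hcoef.le
    have h5 : Real.exp (T₀+1)/γ * (γ * η₁ * Real.exp (-(T₀+1))) = η₁ := by
      rw [Real.exp_neg]
      field_simp
    linarith
  have hmark2 := S10.markov_osc hℓ hT₀2 (show (0:ℝ) < 2*γ by linarith)
    (show 2*γ ≤ 1 by linarith) hβ0
  have hv2 : (volume {T | T ∈ Set.Ioc (0:ℝ) T₀ ∧
      β < S10.eb ℓ (T + 2*γ) - S10.eb ℓ (T - 2*γ)}).toReal ≤ η₁ := by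
    refine le_trans hmark2 ?_
    rw [div_le_iff₀ hβ0]
    nlinarith
  have hxeq1 : S10.xpath G (fn n) (ℓn n) = fun t => fn n t - G (ℓn n t) := rfl
  have hxeq2 : S10.xpath G f ℓ = fun t => f t - G (ℓ t) := rfl
  rw [hxeq1, hxeq2] at hbound
  calc m1Dist (fun t => fn n t - G (ℓn n t)) (fun t => f t - G (ℓ t))
      ≤ η₁ + (_ + _) + Real.exp (-T₀) := hbound
    _ < η := by
        have := hv1
        have := hv2
        rw [hη₁def] at *
        linarith
end
end

section
/- Let W be a standard Brownian motion and let f : [0,∞) → ℝ be a càdlàg non-decreasing function. Then for every t > 0, the event A_t := { inf_{0≤s≤t} (W_s − f_s) = 0 } has probability zero. -/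
open MeasureTheory ProbabilityTheory Filter Set
open scoped ENNReal NNReal Classical

noncomputable section

section AuxLemmasForStmt15
open Real

variable {Ω : Type*} [MeasurableSpace Ω]

lemma gaussPDFReal_le (v : ℝ≥0) (x : ℝ) :
    gaussianPDFReal 0 v x ≤ (Real.sqrt (2 * π * v))⁻¹ := by
  rw [gaussianPDFReal]
  have h1 : rexp (-(x - 0) ^ 2 / (2 * v)) ≤ 1 := by
    rw [Real.exp_le_one_iff]
    apply div_nonpos_of_nonpos_of_nonneg
    · simpa using sq_nonneg (x - 0)
    · positivity
  calc (Real.sqrt (2 * π * v))⁻¹ * rexp (-(x - 0) ^ 2 / (2 * v))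
      ≤ (Real.sqrt (2 * π * v))⁻¹ * 1 := by
        apply mul_le_mul_of_nonneg_left h1 (by positivity)
    _ = _ := by ring

lemma gauss_Ico_le {v : ℝ≥0} (hv : v ≠ 0) (a b : ℝ) :
    gaussianReal 0 v (Set.Ico a b) ≤ ENNReal.ofReal ((b - a) * (Real.sqrt (2 * π * v))⁻¹) := by
  rcases le_or_gt b a with hba | hab
  · have : Set.Ico a b = ∅ := Ico_eq_empty (by exact fun h => absurd hba (not_le.mpr h))
    simp [this]
  rw [gaussianReal_apply 0 hv]
  calc ∫⁻ x in Set.Ico a b, gaussianPDF 0 v x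
      ≤ ∫⁻ _ in Set.Ico a b, ENNReal.ofReal ((Real.sqrt (2 * π * v))⁻¹) := by
        refine setLIntegral_mono' measurableSet_Ico fun x _ => ?_
        rw [gaussianPDF]
        exact ENNReal.ofReal_le_ofReal (gaussPDFReal_le v x)
    _ = ENNReal.ofReal ((Real.sqrt (2 * π * v))⁻¹) * volume (Set.Ico a b) := by
        rw [setLIntegral_const]
    _ = ENNReal.ofReal ((b - a) * (Real.sqrt (2 * π * v))⁻¹) := by
        rw [Real.volume_Ico, ← ENNReal.ofReal_mul (by positivity)]
        ring_nf

lemma numeric_aux : Real.exp 2 * Real.sqrt (2 * π) ≤ 20 := by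
  have he : Real.exp 2 ≤ 7.4 := by
    have h1 : Real.exp 1 ≤ 2.7182818286 := le_of_lt Real.exp_one_lt_d9
    have : Real.exp 2 = Real.exp 1 * Real.exp 1 := by
      rw [← Real.exp_add]; norm_num
    rw [this]
    nlinarith [Real.exp_pos 1]
  have hs : Real.sqrt (2 * π) ≤ 2.6 := by
    rw [show (2.6:ℝ) = Real.sqrt (2.6^2) by rw [Real.sqrt_sq]; norm_num]
    apply Real.sqrt_le_sqrt
    nlinarith [Real.pi_lt_d2]
  nlinarith [Real.sqrt_nonneg (2*π), Real.exp_pos 2]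

lemma gauss_Iio_lb {v : ℝ≥0} (hv : v ≠ 0) :
    ENNReal.ofReal (1/20) ≤ gaussianReal 0 v (Set.Iio (-Real.sqrt v)) := by
  have hv0 : (0:ℝ) < v := by positivity
  have hsv : (0:ℝ) < Real.sqrt v := Real.sqrt_pos.mpr hv0
  have hsub : Set.Ico (-(2*Real.sqrt v)) (-Real.sqrt v) ⊆ Set.Iio (-Real.sqrt v) :=
    fun x hx => hx.2
  rw [gaussianReal_apply 0 hv]
  have hkey : ENNReal.ofReal (1/20)
      ≤ ∫⁻ x in Set.Ico (-(2*Real.sqrt v)) (-Real.sqrt v), gaussianPDF 0 v x := by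
    have hpt : ∀ x ∈ Set.Ico (-(2*Real.sqrt v)) (-Real.sqrt v),
        ENNReal.ofReal ((Real.sqrt (2 * π * v))⁻¹ * Real.exp (-2)) ≤ gaussianPDF 0 v x := by
      intro x hx
      rw [gaussianPDF]
      apply ENNReal.ofReal_le_ofReal
      rw [gaussianPDFReal]
      apply mul_le_mul_of_nonneg_left _ (by positivity)
      rw [Real.exp_le_exp]
      have hx2 : (x - 0)^2 ≤ 4 * v := by
        have h1 : -(2*Real.sqrt v) ≤ x := hx.1
        have h2 : x ≤ 0 := le_of_lt (lt_of_lt_of_le hx.2 (by linarith))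
        have hsq : (2*Real.sqrt v)^2 = 4 * v := by
          rw [mul_pow, Real.sq_sqrt hv0.le]; norm_num
        nlinarith
      have hd : (x - 0)^2 / (2*v) ≤ 2 := by
        rw [div_le_iff₀ (by positivity)]; linarith
      have : -((x-0)^2 / (2*(v:ℝ))) = -(x-0)^2/(2*v) := by ring
      linarith [this]
    calc ENNReal.ofReal (1/20)
        ≤ ENNReal.ofReal ((Real.sqrt (2 * π * v))⁻¹ * Real.exp (-2))
            * volume (Set.Ico (-(2*Real.sqrt v)) (-Real.sqrt v)) := by
          rw [Real.volume_Ico]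
          have harea : -Real.sqrt v - -(2*Real.sqrt v) = Real.sqrt v := by ring
          rw [harea, ← ENNReal.ofReal_mul (by positivity)]
          apply ENNReal.ofReal_le_ofReal
          have hsqrtmul : Real.sqrt (2*π*v) = Real.sqrt (2*π) * Real.sqrt v := by
            rw [← Real.sqrt_mul (by positivity)]
          rw [hsqrtmul]
          rw [mul_comm ((Real.sqrt (2*π) * Real.sqrt v)⁻¹) (Real.exp (-2)), mul_assoc]
          rw [mul_inv, mul_assoc, inv_mul_cancel₀ hsv.ne', mul_one]
          -- goal : 1/20 ≤ exp(-2) * (sqrt (2π))⁻¹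
          rw [Real.exp_neg]
          rw [div_le_iff₀ (by norm_num : (0:ℝ) < 20)]
          have h2 : (Real.exp 2)⁻¹ * (Real.sqrt (2*π))⁻¹ * 20
              = 20 / (Real.exp 2 * Real.sqrt (2*π)) := by
            field_simp
          rw [h2, le_div_iff₀ (by positivity)]
          nlinarith [numeric_aux, Real.exp_pos 2, Real.sqrt_nonneg (2*π)]
      _ = ∫⁻ _ in Set.Ico (-(2*Real.sqrt v)) (-Real.sqrt v),
            ENNReal.ofReal ((Real.sqrt (2 * π * v))⁻¹ * Real.exp (-2)) := by
          rw [setLIntegral_const]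
      _ ≤ _ := setLIntegral_mono' measurableSet_Ico hpt
  exact le_trans hkey (lintegral_mono_set hsub)

lemma gauss_Ici_ub {v : ℝ≥0} (hv : v ≠ 0) :
    gaussianReal 0 v (Set.Ici (-Real.sqrt v)) ≤ ENNReal.ofReal (19/20) := by
  have hdisj : Disjoint (Set.Iio (-Real.sqrt (v:ℝ))) (Set.Ici (-Real.sqrt (v:ℝ))) :=
    Set.Iio_disjoint_Ici le_rfl
  have hunion : Set.Iio (-Real.sqrt (v:ℝ)) ∪ Set.Ici (-Real.sqrt (v:ℝ)) = Set.univ :=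
    Set.Iio_union_Ici
  have hsum : gaussianReal 0 v (Set.Iio (-Real.sqrt (v:ℝ)))
      + gaussianReal 0 v (Set.Ici (-Real.sqrt (v:ℝ))) = 1 := by
    rw [← measure_union hdisj measurableSet_Ici, hunion, measure_univ]
  have h20 : ENNReal.ofReal (19/20) + ENNReal.ofReal (1/20) = 1 := by
    rw [← ENNReal.ofReal_add (by norm_num) (by norm_num)]
    norm_num
  have := gauss_Iio_lb hv
  rw [← ENNReal.add_le_add_iff_right (by simp : ENNReal.ofReal (1/20) ≠ ⊤), h20, ← hsum]
  rw [add_comm]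
  exact add_le_add this le_rfl

lemma integral_x_exp {b : ℝ} (hb : 0 < b) :
    ∫ x in Set.Ioi (0:ℝ), x * Real.exp (-b * x^2) = (2*b)⁻¹ := by
  have hderiv : ∀ x ∈ Set.Ici (0:ℝ),
      HasDerivAt (fun x => -(2*b)⁻¹ * Real.exp (-b * x^2)) (x * Real.exp (-b * x^2)) x := by
    intro x _
    have h1 : HasDerivAt (fun x : ℝ => -b * x^2) (-b * (2*x)) x := by
      simpa using ((hasDerivAt_pow 2 x).const_mul (-b))
    have h2 := (h1.exp).const_mul (-(2*b)⁻¹)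
    refine h2.congr_deriv ?_
    rw [show -(2*b)⁻¹ * (rexp (-b * x ^ 2) * (-b * (2 * x))) = (b * b⁻¹) * (x * rexp (-b*x^2)) by ring,
      mul_inv_cancel₀ hb.ne', one_mul]
  have hint : IntegrableOn (fun x => x * Real.exp (-b * x^2)) (Set.Ioi 0) :=
    (integrable_mul_exp_neg_mul_sq hb).integrableOn
  have htends : Tendsto (fun x => -(2*b)⁻¹ * Real.exp (-b * x^2)) atTop (nhds 0) := by
    have : Tendsto (fun x : ℝ => -b * x^2) atTop atBot := by
      apply Tendsto.const_mul_atTop_of_neg (by linarith)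
      exact tendsto_pow_atTop (by norm_num)
    have := (Real.tendsto_exp_atBot.comp this).const_mul (-(2*b)⁻¹)
    simpa using this
  have := integral_Ioi_of_hasDerivAt_of_tendsto' hderiv hint htends
  rw [this]
  simp [Real.exp_zero]

lemma gauss_moment {v : ℝ≥0} (hv : v ≠ 0) :
    ∫⁻ x in Set.Ioi (0:ℝ), ENNReal.ofReal x ∂(gaussianReal 0 v)
      ≤ ENNReal.ofReal (Real.sqrt v) := by
  have hv0 : (0:ℝ) < v := by positivity
  have hb : (0:ℝ) < (2*(v:ℝ))⁻¹ := by positivity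
  set C : ℝ := (Real.sqrt (2 * π * v))⁻¹ with hC
  have hCpos : 0 < C := by rw [hC]; positivity
  rw [gaussianReal_of_var_ne_zero 0 hv]
  rw [restrict_withDensity measurableSet_Ioi]
  rw [lintegral_withDensity_eq_lintegral_mul _ (measurable_gaussianPDF 0 v)
    (by fun_prop)]
  have hcong : ∫⁻ x in Set.Ioi (0:ℝ), (gaussianPDF 0 v * fun x => ENNReal.ofReal x) x ∂volume
      = ∫⁻ x in Set.Ioi (0:ℝ), ENNReal.ofReal (C * (x * Real.exp (-(2*(v:ℝ))⁻¹ * x^2))) ∂volume := by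
    apply setLIntegral_congr_fun measurableSet_Ioi
    intro x hx
    simp only [Pi.mul_apply, gaussianPDF]
    rw [← ENNReal.ofReal_mul (gaussianPDFReal_nonneg 0 v x)]
    congr 1
    rw [gaussianPDFReal]
    rw [hC]
    ring_nf
  rw [hcong]
  have hInt : IntegrableOn (fun x => C * (x * Real.exp (-(2*(v:ℝ))⁻¹ * x^2))) (Set.Ioi 0) :=
    ((integrable_mul_exp_neg_mul_sq hb).const_mul C).integrableOn
  rw [← ofReal_integral_eq_lintegral_ofReal hInt]
  · rw [integral_const_mul, integral_x_exp hb]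
    apply ENNReal.ofReal_le_ofReal
    have hval : (2*(2*(v:ℝ))⁻¹)⁻¹ = (v:ℝ) := by
      field_simp
    rw [hval]
    -- C * v ≤ sqrt v
    have hsqrtmul : Real.sqrt (2*π*(v:ℝ)) = Real.sqrt (2*π) * Real.sqrt v := by
      rw [← Real.sqrt_mul (by positivity)]
    have hsv : (0:ℝ) < Real.sqrt v := Real.sqrt_pos.mpr hv0
    have h2pi : (1:ℝ) ≤ Real.sqrt (2*π) := by
      rw [show (1:ℝ) = Real.sqrt 1 by simp]
      apply Real.sqrt_le_sqrt
      nlinarith [Real.pi_gt_three]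
    rw [hC, hsqrtmul]
    rw [inv_mul_le_iff₀ (by positivity)]
    calc (v:ℝ) = 1 * ((Real.sqrt v) * (Real.sqrt v)) := by
          rw [Real.mul_self_sqrt hv0.le]; ring
      _ ≤ Real.sqrt (2*π) * Real.sqrt v * Real.sqrt v := by nlinarith
      _ = Real.sqrt (2*π) * Real.sqrt (v:ℝ) * Real.sqrt (v:ℝ) := rfl
  · refine ae_restrict_of_forall_mem measurableSet_Ioi fun x hx => ?_
    have hx0 : (0:ℝ) ≤ x := le_of_lt hx
    positivity

lemma gauss_Ioi_ub {v : ℝ≥0} (hv : v ≠ 0) {c : ℝ} (hc : 0 < c) :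
    gaussianReal 0 v (Set.Ioi c) ≤ ENNReal.ofReal (Real.sqrt v / c) := by
  have h1 : ENNReal.ofReal c * gaussianReal 0 v (Set.Ioi c)
      ≤ ENNReal.ofReal (Real.sqrt v) := by
    calc ENNReal.ofReal c * gaussianReal 0 v (Set.Ioi c)
        = ∫⁻ _ in Set.Ioi c, ENNReal.ofReal c ∂(gaussianReal 0 v) := by
          rw [setLIntegral_const]
      _ ≤ ∫⁻ x in Set.Ioi c, ENNReal.ofReal x ∂(gaussianReal 0 v) :=
          setLIntegral_mono' measurableSet_Ioi fun x hx =>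
            ENNReal.ofReal_le_ofReal (le_of_lt hx)
      _ ≤ ∫⁻ x in Set.Ioi (0:ℝ), ENNReal.ofReal x ∂(gaussianReal 0 v) :=
          lintegral_mono_set (Set.Ioi_subset_Ioi hc.le)
      _ ≤ ENNReal.ofReal (Real.sqrt v) := gauss_moment hv
  rw [ENNReal.ofReal_div_of_pos hc]
  rw [ENNReal.le_div_iff_mul_le (Or.inl (by simp [hc])) (Or.inl (by simp))]
  rwa [mul_comm]

lemma measurable_finset_inf' {ι : Type*} (s : Finset ι)
    (hs : s.Nonempty) (g : ι → Ω → ℝ) (hg : ∀ i, Measurable (g i)) :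
    Measurable fun ω => s.inf' hs fun i => g i ω := by
  induction hs using Finset.Nonempty.cons_induction with
  | singleton a => simpa using hg a
  | cons a s ha hs ih =>
    have heq : (fun ω => (Finset.cons a s ha).inf' (Finset.cons_nonempty ha)
        fun i => g i ω) = fun ω => min (g a ω) (s.inf' hs fun i => g i ω) := by
      ext ω
      rw [Finset.inf'_cons hs]
    rw [heq]
    exact (hg a).min ih

lemma measure_pair_le {α : Type*} [MeasurableSpace α] {P : Measure Ω}
    [IsProbabilityMeasure P] {X : Ω → α} {Z : Ω → ℝ}
    (hX : Measurable X) (hZ : Measurable Z) (hI : IndepFun X Z P)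
    {A : Set (α × ℝ)} (hA : MeasurableSet A) {c : ℝ≥0∞}
    (hc : ∀ y : α, P.map Z {x : ℝ | (y, x) ∈ A} ≤ c) :
    P {ω | (X ω, Z ω) ∈ A} ≤ c := by
  have hpair : Measurable fun ω => (X ω, Z ω) := hX.prodMk hZ
  have hmap : P.map (fun ω => (X ω, Z ω)) = (P.map X).prod (P.map Z) :=
    (indepFun_iff_map_prod_eq_prod_map_map hX.aemeasurable hZ.aemeasurable).mp hI
  have h2 : P {ω | (X ω, Z ω) ∈ A} = ((P.map X).prod (P.map Z)) A := by
    rw [← hmap, Measure.map_apply hpair hA]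
    rfl
  rw [h2, Measure.prod_apply hA]
  calc ∫⁻ y, (P.map Z) (Prod.mk y ⁻¹' A) ∂(P.map X)
      ≤ ∫⁻ _, c ∂(P.map X) := lintegral_mono fun y => hc y
    _ = c := by
        have : IsProbabilityMeasure (P.map X) := Measure.isProbabilityMeasure_map hX.aemeasurable
        simp

/-- Key finite-dimensional bound for claim 1. -/
lemma finmin_bound {P : Measure Ω} (hP : IsProbabilityMeasure P)
    {W : ℝ → Ω → ℝ} (hW : IsStandardBM P W) (f : ℝ → ℝ)
    {h : ℝ} (hh : 0 < h) {δ : ℝ} (hδ : 0 < δ)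
    {F : Finset ℝ} (hFne : F.Nonempty) (hF : ∀ r ∈ F, h ≤ r) :
    P {ω | F.inf' hFne (fun r => W r ω - f r) ∈ Set.Ico 0 δ}
      ≤ ENNReal.ofReal (δ * (Real.sqrt (2 * π * h))⁻¹) := by
  haveI := hP
  classical
  obtain ⟨n, hn⟩ : ∃ n, F.card = n + 1 :=
    ⟨F.card - 1, by have := Finset.card_pos.mpr hFne; omega⟩
  have h0F : (0:ℝ) ∉ F := fun h0 => absurd (hF 0 h0) (not_le.mpr hh)
  set G : Finset ℝ := insert (0:ℝ) F with hGdef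
  have hG : G.card = n + 2 := by
    rw [hGdef, Finset.card_insert_of_notMem h0F, hn]
  set τ : Fin (n+2) → ℝ := fun j => (G.orderEmbOfFin hG) j with hτdef
  have hτmono : Monotone τ := (G.orderEmbOfFin hG).monotone
  have hτinj : Function.Injective τ := (G.orderEmbOfFin hG).injective
  have hτmem : ∀ j, τ j ∈ G := fun j => Finset.orderEmbOfFin_mem G hG j
  have hτsurj : ∀ r ∈ G, ∃ j, τ j = r := by
    intro r hr
    have : r ∈ Set.range τ := by
      rw [hτdef]
      rw [Finset.range_orderEmbOfFin]
      exact hr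
    exact this
  have hτ0 : τ 0 = 0 := by
    obtain ⟨j, hj⟩ := hτsurj 0 (Finset.mem_insert_self 0 F)
    have h1 : τ 0 ≤ 0 := hj ▸ hτmono (Fin.zero_le j)
    rcases Finset.mem_insert.mp (hτmem 0) with h2 | h2
    · exact h2
    · linarith [hF _ h2]
  have hτsuccF : ∀ j : Fin (n+1), τ j.succ ∈ F := by
    intro j
    rcases Finset.mem_insert.mp (hτmem j.succ) with h2 | h2
    · exfalso
      have : j.succ = 0 := hτinj (h2.trans hτ0.symm)
      exact (Fin.succ_ne_zero j) this
    · exact h2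
  have hτsucch : ∀ j : Fin (n+1), h ≤ τ j.succ := fun j => hF _ (hτsuccF j)
  have hτnonneg : ∀ j, 0 ≤ τ j := fun j => hτ0 ▸ hτmono (Fin.zero_le j)
  -- increments
  set D : Fin (n+1) → Ω → ℝ := fun i ω => W (τ i.succ) ω - W (τ i.castSucc) ω with hDdef
  have hindep : iIndepFun (m := fun _ => inferInstance) D P :=
    hW.indep_incr (n+1) τ hτmono hτnonneg
  have hDmeas : ∀ i, Measurable (D i) := fun i => (hW.meas _).sub (hW.meas _)
  -- telescoping
  have htel : ∀ ω, ∀ j : Fin (n+1), W (τ j.succ) ω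
      = W (τ (0 : Fin (n+1)).succ) ω
        + ∑ i ∈ Finset.univ.filter (fun i : Fin (n+1) => i ≤ j ∧ i ≠ 0), D i ω := by
    intro ω
    intro j
    induction j using Fin.induction with
    | zero =>
      have : Finset.univ.filter (fun i : Fin (n+1) => i ≤ 0 ∧ i ≠ 0) = ∅ := by
        apply Finset.filter_false_of_mem
        intro i _ hi
        exact hi.2 (le_antisymm hi.1 (Fin.zero_le i))
      rw [this]
      simp
    | succ k ih =>
      have hfilter : Finset.univ.filter (fun i : Fin (n+1) => i ≤ k.succ ∧ i ≠ 0)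
          = insert k.succ (Finset.univ.filter (fun i : Fin (n+1) => i ≤ k.castSucc ∧ i ≠ 0)) := by
        ext i
        simp only [Finset.mem_filter, Finset.mem_univ, true_and, Finset.mem_insert]
        constructor
        · rintro ⟨h1, h2⟩
          rcases eq_or_lt_of_le h1 with h3 | h3
          · exact Or.inl h3
          · refine Or.inr ⟨?_, h2⟩
            rw [Fin.lt_def] at h3
            rw [Fin.le_def]
            simp only [Fin.val_succ] at h3 ⊢
            rw [Fin.coe_castSucc]
            omega
        · rintro (h1 | ⟨h1, h2⟩)
          · exact ⟨le_of_eq h1, h1 ▸ Fin.succ_ne_zero k⟩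
          · constructor
            · rw [Fin.le_def] at h1 ⊢
              simp only [Fin.coe_castSucc] at h1
              simp only [Fin.val_succ]
              omega
            · exact h2
      have hnotmem : k.succ ∉ Finset.univ.filter
          (fun i : Fin (n+1) => i ≤ k.castSucc ∧ i ≠ 0) := by
        simp only [Finset.mem_filter, Finset.mem_univ, true_and, not_and]
        intro h1
        exfalso
        rw [Fin.le_def] at h1
        simp only [Fin.val_succ, Fin.coe_castSucc] at h1
        omega
      rw [hfilter, Finset.sum_insert hnotmem, ← add_assoc]
      have hcs : W (τ k.succ.castSucc) ω = W (τ (0 : Fin (n+1)).succ) ω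
          + ∑ i ∈ Finset.univ.filter (fun i : Fin (n+1) => i ≤ k.castSucc ∧ i ≠ 0), D i ω := by
        rw [← Fin.succ_castSucc]
        exact ih
      have : D k.succ ω = W (τ k.succ.succ) ω - W (τ k.succ.castSucc) ω := rfl
      rw [this, hcs]
      ring
  -- the first positive time
  set s1 : ℝ := τ (0 : Fin (n+1)).succ with hs1def
  have hs1h : h ≤ s1 := hτsucch 0
  have hs1pos : 0 < s1 := lt_of_lt_of_le hh hs1h
  -- T and ψ
  set T : Finset (Fin (n+1)) := Finset.univ.erase 0 with hTdef
  have hdisj : Disjoint ({0} : Finset (Fin (n+1))) T := by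
    rw [Finset.disjoint_left]
    intro i hi
    rw [Finset.mem_singleton] at hi
    subst hi
    simp [hTdef]
  have hunivne : (Finset.univ : Finset (Fin (n+1))).Nonempty := Finset.univ_nonempty
  set ψ : ((i : ↥T) → ℝ) → ℝ := fun y => Finset.univ.inf' hunivne
      (fun j : Fin (n+1) =>
        (∑ i ∈ T.attach, if (i : Fin (n+1)) ≤ j then y i else 0) - f (τ j.succ)) with hψdef
  have hψmeas : Measurable ψ := by
    apply measurable_finset_inf'
    intro j
    apply Measurable.sub_const
    apply Finset.measurable_sum
    intro i _
    by_cases hij : (i : Fin (n+1)) ≤ j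
    · simpa [hij] using measurable_pi_apply (a := i)
    · simp [hij]
  -- the identity
  have hid : ∀ ω, F.inf' hFne (fun r => W r ω - f r)
      = W s1 ω + ψ (fun i : ↥T => D i ω) := by
    intro ω
    have hinf2 : F.inf' hFne (fun r => W r ω - f r)
        = Finset.univ.inf' hunivne (fun j : Fin (n+1) => W (τ j.succ) ω - f (τ j.succ)) := by
      apply le_antisymm
      · apply Finset.le_inf'
        intro j _
        exact Finset.inf'_le _ (hτsuccF j)
      · apply Finset.le_inf'
        intro r hr
        have hrG : r ∈ G := Finset.mem_insert_of_mem hr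
        obtain ⟨k, hk⟩ := hτsurj r hrG
        have hk0 : k ≠ 0 := by
          intro hk0
          rw [hk0, hτ0] at hk
          linarith [hF r hr]
        have hkk : (k.pred hk0).succ = k := Fin.succ_pred k hk0
        calc Finset.univ.inf' hunivne (fun j : Fin (n+1) => W (τ j.succ) ω - f (τ j.succ))
            ≤ W (τ (k.pred hk0).succ) ω - f (τ (k.pred hk0).succ) :=
              Finset.inf'_le _ (Finset.mem_univ _)
          _ = W r ω - f r := by rw [hkk, hk]
    rw [hinf2]
    have hsum : ∀ j : Fin (n+1),
        (∑ i ∈ T.attach, if (i : Fin (n+1)) ≤ j then D i ω else 0)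
          = ∑ i ∈ Finset.univ.filter (fun i : Fin (n+1) => i ≤ j ∧ i ≠ 0), D i ω := by
      intro j
      rw [Finset.sum_attach T (fun i => if i ≤ j then D i ω else 0)]
      rw [Finset.sum_ite, Finset.sum_const_zero, add_zero]
      congr 1
      ext i
      simp only [Finset.mem_filter, Finset.mem_univ, true_and, hTdef, Finset.mem_erase]
      tauto
    have hadd : ∀ (c : ℝ) (g : Fin (n+1) → ℝ),
        (Finset.univ.inf' hunivne fun j => c + g j) = c + Finset.univ.inf' hunivne g := by
      intro c g
      apply le_antisymm
      · obtain ⟨j, _, hval⟩ := Finset.exists_mem_eq_inf' hunivne g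
        rw [hval]
        exact Finset.inf'_le _ (Finset.mem_univ j)
      · apply Finset.le_inf'
        intro j _
        exact add_le_add le_rfl (Finset.inf'_le _ (Finset.mem_univ j))
    rw [hψdef]
    dsimp only
    have hcong1 : (Finset.univ.inf' hunivne fun j : Fin (n+1) => W (τ j.succ) ω - f (τ j.succ))
        = Finset.univ.inf' hunivne fun j : Fin (n+1) =>
            W s1 ω + ((∑ i ∈ T.attach, if (i : Fin (n+1)) ≤ j then D i ω else 0)
              - f (τ j.succ)) := by
      apply Finset.inf'_congr _ rfl
      intro j _
      rw [hsum j, htel ω j]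
      ring
    rw [hcong1, hadd]
  -- independence
  have hZae : (fun ω => D 0 ω) =ᵐ[P] (fun ω => W s1 ω) := by
    filter_upwards [hW.init] with ω hω
    have hcs0 : τ ((0 : Fin (n+1)).castSucc) = (0:ℝ) := by
      rw [Fin.castSucc_zero, hτ0]
    rw [hDdef]
    dsimp only
    rw [hcs0, hω]
    ring
  have hIbase := hindep.indepFun_finset {0} T hdisj hDmeas
  have hmem0 : (0 : Fin (n+1)) ∈ ({0} : Finset (Fin (n+1))) := Finset.mem_singleton_self 0
  have hIbase2 : IndepFun (fun a (i : ↥T) => D i a) (D 0) P := by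
    have := (hIbase.comp (measurable_pi_apply (⟨0, hmem0⟩ : ↥({0} : Finset (Fin (n+1)))))
      measurable_id).symm
    exact this
  have hIZ : IndepFun (fun a (i : ↥T) => D i a) (fun ω => W s1 ω) P :=
    hIbase2.congr (Filter.EventuallyEq.refl _ _) hZae
  -- law of W s1
  have hD0law : P.map (D 0) = gaussianReal 0 (Real.toNNReal s1) := by
    have hD0 : D 0 = fun ω => W s1 ω - W 0 ω := by
      funext ω
      rw [hDdef]
      dsimp only
      rw [show τ ((0 : Fin (n+1)).castSucc) = (0:ℝ) by rw [Fin.castSucc_zero, hτ0]]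
    rw [hD0]
    have := hW.incr_law 0 s1 le_rfl hs1pos.le
    simpa using this
  have hZlaw : P.map (fun ω => W s1 ω) = gaussianReal 0 (Real.toNNReal s1) := by
    rw [← Measure.map_congr hZae]
    exact hD0law
  set v₁ : ℝ≥0 := Real.toNNReal s1 with hv₁def
  have hv₁ : v₁ ≠ 0 := by
    simp only [hv₁def, ne_eq, Real.toNNReal_eq_zero, not_le]
    exact hs1pos
  have hv₁coe : (v₁ : ℝ) = s1 := Real.coe_toNNReal s1 hs1pos.le
  -- the event as a pair event
  set A : Set (((i : ↥T) → ℝ) × ℝ) := {p | p.2 + ψ p.1 ∈ Set.Ico 0 δ} with hAdef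
  have hAmeas : MeasurableSet A := by
    have : Measurable fun p : ((i : ↥T) → ℝ) × ℝ => p.2 + ψ p.1 :=
      measurable_snd.add (hψmeas.comp measurable_fst)
    exact this measurableSet_Ico
  have hXmeas : Measurable fun ω => (fun i : ↥T => D i ω) :=
    measurable_pi_lambda _ fun i => hDmeas i
  have hev : {ω | F.inf' hFne (fun r => W r ω - f r) ∈ Set.Ico 0 δ}
      = {ω | ((fun i : ↥T => D i ω), W s1 ω) ∈ A} := by
    ext ω
    simp only [Set.mem_setOf_eq, hAdef, hid ω]
  rw [hev]
  apply measure_pair_le hXmeas (hW.meas s1) hIZ hAmeas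
  intro y
  have hslice : {x : ℝ | (y, x) ∈ A} = Set.Ico (-(ψ y)) (δ - ψ y) := by
    ext x
    simp only [hAdef, Set.mem_setOf_eq, Set.mem_Ico]
    constructor
    · rintro ⟨h1, h2⟩
      exact ⟨by linarith, by linarith⟩
    · rintro ⟨h1, h2⟩
      exact ⟨by linarith, by linarith⟩
  rw [hslice, hZlaw]
  calc gaussianReal 0 v₁ (Set.Ico (-(ψ y)) (δ - ψ y))
      ≤ ENNReal.ofReal ((δ - ψ y - -(ψ y)) * (Real.sqrt (2 * π * v₁))⁻¹) :=
        gauss_Ico_le hv₁ _ _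
    _ ≤ ENNReal.ofReal (δ * (Real.sqrt (2 * π * h))⁻¹) := by
        apply ENNReal.ofReal_le_ofReal
        have h1 : δ - ψ y - -(ψ y) = δ := by ring
        rw [h1]
        apply mul_le_mul_of_nonneg_left _ hδ.le
        apply inv_anti₀
        · positivity
        · apply Real.sqrt_le_sqrt
          rw [hv₁coe]
          nlinarith [Real.pi_pos]

lemma null_of_le_ofReal {P : Measure Ω} {s : Set Ω} {c : ℝ}
    (h : ∀ δ : ℝ, 0 < δ → P s ≤ ENNReal.ofReal (δ * c)) : P s = 0 := by
  have htend : Tendsto (fun n : ℕ => ENNReal.ofReal ((1/(n+1)) * c)) atTop (nhds 0) := by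
    rw [show (0:ℝ≥0∞) = ENNReal.ofReal 0 by simp]
    apply ENNReal.tendsto_ofReal
    have h2 : Tendsto (fun n : ℕ => (1:ℝ)/(n+1)) atTop (nhds 0) :=
      tendsto_one_div_add_atTop_nhds_zero_nat
    simpa using h2.mul_const c
  have hle : ∀ n : ℕ, P s ≤ ENNReal.ofReal ((1/(n+1)) * c) := fun n =>
    h _ (by positivity)
  have := ge_of_tendsto' htend hle
  simpa using le_antisymm this zero_le

lemma bdd_helper {W : ℝ → Ω → ℝ} {f : ℝ → ℝ} (hmono : MonotoneOn f (Set.Ici (0:ℝ)))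
    {ω : Ω} (hc : ContinuousOn (fun s => W s ω) (Set.Ici (0:ℝ))) {a b : ℝ} (ha : 0 ≤ a) :
    BddBelow ((fun s => W s ω - f s) '' Set.Icc a b) := by
  rcases le_or_gt a b with hab | hab
  · have hsub : Set.Icc a b ⊆ Set.Ici (0:ℝ) := fun x hx => le_trans ha hx.1
    obtain ⟨c, hc'⟩ := isCompact_Icc.bddBelow_image (hc.mono hsub)
    refine ⟨c - f b, ?_⟩
    rintro x ⟨s, hs, rfl⟩
    have h1 : c ≤ W s ω := hc' ⟨s, hs, rfl⟩
    have h2 : f s ≤ f b := hmono (le_trans ha hs.1) (le_trans ha hab) hs.2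
    simp only
    linarith
  · rw [Set.Icc_eq_empty (not_le.mpr hab)]
    simp

lemma claim1 {P : Measure Ω} (hP : IsProbabilityMeasure P)
    {W : ℝ → Ω → ℝ} (hW : IsStandardBM P W) {f : ℝ → ℝ}
    (hmono : MonotoneOn f (Set.Ici (0:ℝ)))
    (hrc : ∀ s : ℝ, 0 ≤ s → ContinuousWithinAt f (Set.Ici s) s)
    {h t : ℝ} (hh : 0 < h) (hht : h ≤ t) :
    P ({ω | W 0 ω = 0 ∧ ContinuousOn (fun s => W s ω) (Set.Ici (0:ℝ))}
      ∩ {ω | sInf ((fun s => W s ω - f s) '' Set.Icc h t) = 0}) = 0 := by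
  haveI := hP
  classical
  set E₁ := {ω | W 0 ω = 0 ∧ ContinuousOn (fun s => W s ω) (Set.Ici (0:ℝ))}
      ∩ {ω | sInf ((fun s => W s ω - f s) '' Set.Icc h t) = 0} with hE₁def
  -- enumeration of candidate times
  set q : ℕ → ℝ := fun n =>
    if (((Denumerable.eqv ℚ).symm n : ℚ) : ℝ) ∈ Set.Ioo h t
    then (((Denumerable.eqv ℚ).symm n : ℚ) : ℝ) else t with hqdef
  have hqmem : ∀ k, q k ∈ Set.Icc h t := by
    intro k
    rw [hqdef]
    dsimp only
    split_ifs with hmem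
    · exact ⟨hmem.1.le, hmem.2.le⟩
    · exact ⟨hht, le_rfl⟩
  have hqrat : ∀ r : ℚ, (r:ℝ) ∈ Set.Ioo h t → ∃ k, q k = (r:ℝ) := by
    intro r hr
    refine ⟨(Denumerable.eqv ℚ) r, ?_⟩
    rw [hqdef]
    simp only [Equiv.symm_apply_apply]
    rw [if_pos hr]
  have hqt : ∃ k, q k = t := by
    obtain ⟨r, hr⟩ := exists_rat_gt t
    refine ⟨(Denumerable.eqv ℚ) r, ?_⟩
    rw [hqdef]
    simp only [Equiv.symm_apply_apply]
    rw [if_neg]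
    intro hmem
    exact absurd hmem.2 (not_lt.mpr hr.le)
  -- finite sets
  set F : ℕ → Finset ℝ := fun K => (Finset.range (K+1)).image q with hFdef
  have hFne : ∀ K, (F K).Nonempty := fun K =>
    Finset.Nonempty.image ⟨0, Finset.mem_range.mpr (by omega)⟩ q
  have hFh : ∀ K, ∀ r ∈ F K, h ≤ r := by
    intro K r hr
    obtain ⟨k, _, rfl⟩ := Finset.mem_image.mp hr
    exact (hqmem k).1
  have hFmem : ∀ K, ∀ r ∈ F K, r ∈ Set.Icc h t := by
    intro K r hr
    obtain ⟨k, _, rfl⟩ := Finset.mem_image.mp hr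
    exact hqmem k
  apply null_of_le_ofReal (c := (Real.sqrt (2 * π * h))⁻¹)
  intro δ hδ
  set S : ℕ → Set Ω := fun K =>
    {ω | (F K).inf' (hFne K) (fun r => W r ω - f r) ∈ Set.Ico 0 δ} with hSdef
  set T : ℕ → Set Ω := fun K => ⋂ (K' : ℕ) (_ : K ≤ K'), S K' with hTdef
  have hTmono : Monotone T := by
    intro K₁ K₂ hK ω hω
    simp only [hTdef, Set.mem_iInter] at hω ⊢
    intro K' hK'
    exact hω K' (le_trans hK hK')
  have hsub : E₁ ⊆ ⋃ K, T K := by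
    rintro ω ⟨⟨hW0, hWc⟩, hsinf⟩
    simp only [Set.mem_setOf_eq] at hsinf
    set g : ℝ → ℝ := fun s => W s ω - f s with hgdef
    have hbdd : BddBelow (g '' Set.Icc h t) := bdd_helper hmono hWc hh.le
    have hne : (g '' Set.Icc h t).Nonempty :=
      ⟨g h, h, ⟨le_rfl, hht⟩, rfl⟩
    have hge : ∀ r ∈ Set.Icc h t, (0:ℝ) ≤ g r := by
      intro r hr
      rw [← hsinf]
      exact csInf_le hbdd ⟨r, hr, rfl⟩
    -- find k₀ with g (q k₀) < δ
    have hk₀ : ∃ k, g (q k) < δ := by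
      obtain ⟨x, hx, hxδ⟩ := exists_lt_of_csInf_lt hne (by rw [hsinf]; exact hδ)
      obtain ⟨s, hs, rfl⟩ := hx
      rcases eq_or_lt_of_le hs.2 with hst | hst
      · obtain ⟨k, hk⟩ := hqt
        exact ⟨k, by rw [hk, ← hst]; exact hxδ⟩
      · have hs0 : (0:ℝ) ≤ s := le_trans hh.le hs.1
        have hWs : ContinuousWithinAt (fun u => W u ω) (Set.Ici s) s :=
          (hWc s hs0).mono (Set.Ici_subset_Ici.mpr hs0)
        have hfs : ContinuousWithinAt f (Set.Ici s) s := hrc s hs0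
        have hgs : ContinuousWithinAt g (Set.Ici s) s := hWs.sub hfs
        have hev : ∀ᶠ u in nhdsWithin s (Set.Ici s), g u < δ :=
          hgs.eventually_lt_const hxδ
        have hev' : {u : ℝ | g u < δ} ∈ nhdsWithin s (Set.Ici s) := hev
        rw [mem_nhdsGE_iff_exists_Ico_subset] at hev'
        obtain ⟨u, hu, hsub'⟩ := hev'
        obtain ⟨r, hr1, hr2⟩ := exists_rat_btwn (lt_min (Set.mem_Ioi.mp hu) hst)
        have hrIoo : (r:ℝ) ∈ Set.Ioo h t :=
          ⟨lt_of_le_of_lt hs.1 hr1, lt_of_lt_of_le hr2 (min_le_right _ _)⟩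
        obtain ⟨k, hk⟩ := hqrat r hrIoo
        refine ⟨k, ?_⟩
        rw [hk]
        exact hsub' ⟨hr1.le, lt_of_lt_of_le hr2 (min_le_left _ _)⟩
    obtain ⟨k₀, hk₀⟩ := hk₀
    apply Set.mem_iUnion.mpr
    refine ⟨k₀, ?_⟩
    simp only [hTdef, Set.mem_iInter]
    intro K' hK'
    simp only [hSdef, Set.mem_setOf_eq, Set.mem_Ico]
    constructor
    · apply Finset.le_inf'
      intro r hr
      exact hge r (hFmem K' r hr)
    · calc (F K').inf' (hFne K') (fun r => W r ω - f r) ≤ g (q k₀) := by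
            apply Finset.inf'_le
            exact Finset.mem_image.mpr ⟨k₀, Finset.mem_range.mpr (by omega), rfl⟩
        _ < δ := hk₀
  calc P E₁ ≤ P (⋃ K, T K) := measure_mono hsub
    _ = ⨆ K, P (T K) := Directed.measure_iUnion (hTmono.directed_le)
    _ ≤ ENNReal.ofReal (δ * (Real.sqrt (2 * π * h))⁻¹) := by
        apply iSup_le
        intro K
        calc P (T K) ≤ P (S K) := by
              apply measure_mono
              intro ω hω
              simp only [hTdef, Set.mem_iInter] at hω
              exact hω K le_rfl
          _ ≤ ENNReal.ofReal (δ * (Real.sqrt (2 * π * h))⁻¹) :=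
              finmin_bound hP hW f hh hδ (hFne K) (hFh K)

lemma claim2aux {P : Measure Ω} (hP : IsProbabilityMeasure P)
    {W : ℝ → Ω → ℝ} (hW : IsStandardBM P W) {t : ℝ} (ht : 0 < t)
    {ε : ℝ} (hε : 0 < ε) :
    P {ω | ∀ s ∈ Set.Icc (0:ℝ) t, 0 ≤ W s ω} ≤ ENNReal.ofReal ε := by
  haveI := hP
  classical
  obtain ⟨n, hn⟩ : ∃ n : ℕ, (19/20 : ℝ)^n < ε/2 :=
    exists_pow_lt_of_lt_one (by positivity) (by norm_num)
  set κ : ℝ := max 1 (2*(n+1)/ε) with hκdef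
  have hκ1 : (1:ℝ) ≤ κ := le_max_left _ _
  have hκpos : (0:ℝ) < κ := lt_of_lt_of_le one_pos hκ1
  have hκge : 2*(n+1)/ε ≤ κ := le_max_right _ _
  set K : ℝ := κ^2 with hKdef
  have hKpos : (0:ℝ) < K := by positivity
  have hsqrtK : Real.sqrt K = κ := by rw [hKdef, Real.sqrt_sq hκpos.le]
  have hbase : (0:ℝ) < 1 + K := by linarith
  have hbase1 : (1:ℝ) ≤ 1 + K := by linarith
  set τ : Fin (n+1) → ℝ := fun j => t * (1+K)^(j:ℕ) / (1+K)^n with hτdef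
  have hτpos : ∀ j, 0 < τ j := by
    intro j
    rw [hτdef]
    positivity
  have hτle : ∀ j, τ j ≤ t := by
    intro j
    rw [hτdef]
    dsimp only
    rw [div_le_iff₀ (by positivity)]
    have : (1+K)^(j:ℕ) ≤ (1+K)^n := pow_le_pow_right₀ hbase1 (Nat.lt_succ_iff.mp j.isLt)
    nlinarith
  have hτmono : Monotone τ := by
    intro j j' hj
    rw [hτdef]
    dsimp only
    apply div_le_div_of_nonneg_right _ (by positivity)
    · have : (1+K)^(j:ℕ) ≤ (1+K)^(j':ℕ) := pow_le_pow_right₀ hbase1 hj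
      nlinarith
  have hτsucc : ∀ i : Fin n, τ i.succ - τ i.castSucc = K * τ i.castSucc := by
    intro i
    rw [hτdef]
    dsimp only
    rw [Fin.val_succ, Fin.coe_castSucc, pow_succ]
    ring
  set D : Fin n → Ω → ℝ := fun i ω => W (τ i.succ) ω - W (τ i.castSucc) ω with hDdef
  have hindep : iIndepFun (m := fun _ => inferInstance) D P :=
    hW.indep_incr n τ hτmono (fun j => (hτpos j).le)
  have hDmeas : ∀ i, Measurable (D i) := fun i => (hW.meas _).sub (hW.meas _)
  set c : Fin n → ℝ := fun i => Real.sqrt (K * τ i.castSucc) with hcdef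
  have hcpos : ∀ i, 0 < c i := by
    intro i
    rw [hcdef]
    dsimp only
    apply Real.sqrt_pos.mpr
    exact mul_pos hKpos (hτpos _)
  -- inclusion
  have hincl : {ω | ∀ s ∈ Set.Icc (0:ℝ) t, 0 ≤ W s ω}
      ⊆ (⋂ i : Fin n, {ω | -(c i) ≤ D i ω}) ∪ (⋃ i : Fin n, {ω | c i < W (τ i.castSucc) ω}) := by
    intro ω hω
    simp only [Set.mem_setOf_eq] at hω
    by_cases hbad : ∃ i : Fin n, c i < W (τ i.castSucc) ω
    · right
      obtain ⟨i, hi⟩ := hbad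
      exact Set.mem_iUnion.mpr ⟨i, hi⟩
    · left
      push_neg at hbad
      apply Set.mem_iInter.mpr
      intro i
      have h1 : 0 ≤ W (τ i.succ) ω := hω _ ⟨(hτpos _).le, hτle _⟩
      have h2 : W (τ i.castSucc) ω ≤ c i := hbad i
      simp only [Set.mem_setOf_eq, hDdef]
      linarith
  -- product bound
  have hprod : P (⋂ i : Fin n, {ω | -(c i) ≤ D i ω}) ≤ ENNReal.ofReal (ε/2) := by
    have heq : ∀ i : Fin n, {ω | -(c i) ≤ D i ω} = D i ⁻¹' (Set.Ici (-(c i))) := by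
      intro i
      rfl
    have := hindep.meas_iInter (s := fun i => D i ⁻¹' (Set.Ici (-(c i))))
      (fun i => ⟨Set.Ici (-(c i)), measurableSet_Ici, rfl⟩)
    simp only [heq]
    rw [this]
    have hfac : ∀ i : Fin n, P (D i ⁻¹' (Set.Ici (-(c i)))) ≤ ENNReal.ofReal (19/20) := by
      intro i
      rw [← Measure.map_apply (hDmeas i) measurableSet_Ici]
      have hlaw : P.map (D i) = gaussianReal 0 (Real.toNNReal (τ i.succ - τ i.castSucc)) :=
        hW.incr_law _ _ (hτpos _).le (hτmono (Fin.castSucc_le_succ i))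
      rw [hlaw]
      set v : ℝ≥0 := Real.toNNReal (τ i.succ - τ i.castSucc) with hvdef
      have hvpos : (0:ℝ) < τ i.succ - τ i.castSucc := by
        rw [hτsucc i]
        exact mul_pos hKpos (hτpos _)
      have hv : v ≠ 0 := by
        simp only [hvdef, ne_eq, Real.toNNReal_eq_zero, not_le]
        exact hvpos
      have hvcoe : (v:ℝ) = τ i.succ - τ i.castSucc := Real.coe_toNNReal _ hvpos.le
      have hcv : c i = Real.sqrt v := by
        rw [hvcoe, hτsucc i, hcdef]
      rw [hcv]
      exact gauss_Ici_ub hv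
    calc ∏ i : Fin n, P (D i ⁻¹' (Set.Ici (-(c i))))
        ≤ ∏ _i : Fin n, ENNReal.ofReal (19/20) := Finset.prod_le_prod' fun i _ => hfac i
      _ = ENNReal.ofReal (19/20) ^ n := by
          rw [Finset.prod_const, Finset.card_univ, Fintype.card_fin]
      _ = ENNReal.ofReal ((19/20)^n) := by
          rw [← ENNReal.ofReal_pow (by norm_num)]
      _ ≤ ENNReal.ofReal (ε/2) := ENNReal.ofReal_le_ofReal hn.le
  -- tail bound
  have htail : P (⋃ i : Fin n, {ω | c i < W (τ i.castSucc) ω}) ≤ ENNReal.ofReal (ε/2) := by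
    have hone : ∀ i : Fin n, P {ω | c i < W (τ i.castSucc) ω} ≤ ENNReal.ofReal κ⁻¹ := by
      intro i
      have hincl2 : {ω | c i < W (τ i.castSucc) ω}
          ⊆ {ω | c i < W (τ i.castSucc) ω - W 0 ω} ∪ {ω | ¬ (W 0 ω = 0)} := by
        intro ω hω
        by_cases h0 : W 0 ω = 0
        · left
          simp only [Set.mem_setOf_eq, h0, sub_zero]
          exact hω
        · right
          exact h0
      calc P {ω | c i < W (τ i.castSucc) ω}
          ≤ P ({ω | c i < W (τ i.castSucc) ω - W 0 ω} ∪ {ω | ¬ (W 0 ω = 0)}) :=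
            measure_mono hincl2
        _ ≤ P {ω | c i < W (τ i.castSucc) ω - W 0 ω} + P {ω | ¬ (W 0 ω = 0)} :=
            measure_union_le _ _
        _ ≤ ENNReal.ofReal κ⁻¹ + 0 := by
            apply add_le_add
            · have heq2 : {ω | c i < W (τ i.castSucc) ω - W 0 ω}
                  = (fun ω => W (τ i.castSucc) ω - W 0 ω) ⁻¹' (Set.Ioi (c i)) := rfl
              rw [heq2, ← Measure.map_apply (show Measurable (fun ω => W (τ i.castSucc) ω - W 0 ω) from (hW.meas _).sub (hW.meas _)) measurableSet_Ioi]
              have hlaw : P.map (fun ω => W (τ i.castSucc) ω - W 0 ω)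
                  = gaussianReal 0 (Real.toNNReal (τ i.castSucc - 0)) :=
                hW.incr_law 0 _ le_rfl (hτpos _).le
              rw [hlaw]
              set u : ℝ≥0 := Real.toNNReal (τ i.castSucc - 0) with hudef
              have hupos : (0:ℝ) < τ i.castSucc - 0 := by
                rw [sub_zero]; exact hτpos _
              have hu : u ≠ 0 := by
                simp only [hudef, ne_eq, Real.toNNReal_eq_zero, not_le]
                exact hupos
              have hucoe : (u:ℝ) = τ i.castSucc := by
                rw [hudef, Real.coe_toNNReal _ hupos.le, sub_zero]
              calc gaussianReal 0 u (Set.Ioi (c i))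
                  ≤ ENNReal.ofReal (Real.sqrt u / c i) := gauss_Ioi_ub hu (hcpos i)
                _ = ENNReal.ofReal κ⁻¹ := by
                    congr 1
                    rw [hcdef]
                    dsimp only
                    rw [Real.sqrt_mul hKpos.le, hucoe, hsqrtK]
                    rw [div_eq_iff (by positivity)]
                    field_simp
            · rw [← ae_iff.mp hW.init]
        _ = ENNReal.ofReal κ⁻¹ := by rw [add_zero]
    calc P (⋃ i : Fin n, {ω | c i < W (τ i.castSucc) ω})
        ≤ ∑' i : Fin n, P {ω | c i < W (τ i.castSucc) ω} := measure_iUnion_le _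
      _ = ∑ i : Fin n, P {ω | c i < W (τ i.castSucc) ω} := tsum_fintype _
      _ ≤ ∑ _i : Fin n, ENNReal.ofReal κ⁻¹ := Finset.sum_le_sum fun i _ => hone i
      _ = n * ENNReal.ofReal κ⁻¹ := by
          rw [Finset.sum_const, Finset.card_univ, Fintype.card_fin]
          simp [nsmul_eq_mul]
      _ ≤ ENNReal.ofReal (ε/2) := by
          rw [show (n : ℝ≥0∞) = ENNReal.ofReal (n:ℝ) by simp]
          rw [← ENNReal.ofReal_mul (by positivity)]
          apply ENNReal.ofReal_le_ofReal
          have hκinv : κ⁻¹ ≤ ε/(2*((n:ℝ)+1)) := by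
            have h1 : (0:ℝ) < 2*((n:ℝ)+1)/ε := by positivity
            have h2 := inv_anti₀ h1 hκge
            rwa [inv_div] at h2
          calc (n:ℝ) * κ⁻¹ ≤ (n:ℝ) * (ε/(2*((n:ℝ)+1))) := by
                apply mul_le_mul_of_nonneg_left hκinv (Nat.cast_nonneg n)
            _ = ε * (n:ℝ) / (2*((n:ℝ)+1)) := by ring
            _ ≤ ε/2 := by
                rw [div_le_div_iff₀ (by positivity) (by norm_num : (0:ℝ) < 2)]
                nlinarith [Nat.cast_nonneg (α := ℝ) n, hε]
  calc P {ω | ∀ s ∈ Set.Icc (0:ℝ) t, 0 ≤ W s ω}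
      ≤ P ((⋂ i : Fin n, {ω | -(c i) ≤ D i ω})
          ∪ (⋃ i : Fin n, {ω | c i < W (τ i.castSucc) ω})) := measure_mono hincl
    _ ≤ P (⋂ i : Fin n, {ω | -(c i) ≤ D i ω})
          + P (⋃ i : Fin n, {ω | c i < W (τ i.castSucc) ω}) := measure_union_le _ _
    _ ≤ ENNReal.ofReal (ε/2) + ENNReal.ofReal (ε/2) := add_le_add hprod htail
    _ = ENNReal.ofReal ε := by
        rw [← ENNReal.ofReal_add (by positivity) (by positivity)]
        norm_num

lemma pointwiseB {W : ℝ → Ω → ℝ} {f : ℝ → ℝ}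
    (hmono : MonotoneOn f (Set.Ici (0:ℝ)))
    (hrc : ∀ s : ℝ, 0 ≤ s → ContinuousWithinAt f (Set.Ici s) s)
    {t : ℝ} (ht : 0 < t) {ω : Ω}
    (hW0 : W 0 ω = 0) (hWc : ContinuousOn (fun s => W s ω) (Set.Ici (0:ℝ)))
    (hn : ∀ n : ℕ, sInf ((fun s => W s ω - f s) '' Set.Icc 0 (t/(n+1))) = 0) :
    ∀ s ∈ Set.Icc (0:ℝ) t, 0 ≤ W s ω := by
  set g : ℝ → ℝ := fun s => W s ω - f s with hgdef
  have h0 := hn 0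
  rw [show t/((0:ℕ)+1) = t by norm_num] at h0
  have hbdd0 : BddBelow (g '' Set.Icc 0 t) := bdd_helper hmono hWc le_rfl
  have hg0 : ∀ s ∈ Set.Icc (0:ℝ) t, 0 ≤ g s := by
    intro s hs
    rw [← h0]
    exact csInf_le hbdd0 ⟨s, hs, rfl⟩
  have hf0le : f 0 ≤ 0 := by
    have := hg0 0 ⟨le_rfl, ht.le⟩
    simp only [hgdef, hW0] at this
    linarith
  have hf0 : f 0 = 0 := by
    by_contra hne
    have hf0lt : f 0 < 0 := lt_of_le_of_ne hf0le hne
    set ε : ℝ := -f 0 with hεdef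
    have hε : 0 < ε := by simp only [hεdef]; linarith
    have hWs : ContinuousWithinAt (fun s => W s ω) (Set.Ici (0:ℝ)) 0 :=
      hWc 0 Set.self_mem_Ici
    have ev1 : ∀ᶠ s in nhdsWithin 0 (Set.Ici (0:ℝ)), -(ε/4) < W s ω := by
      apply hWs.eventually_const_lt
      show -(ε/4) < W 0 ω
      rw [hW0]
      linarith
    have ev2 : ∀ᶠ s in nhdsWithin 0 (Set.Ici (0:ℝ)), f s < f 0 + ε/4 := by
      apply (hrc 0 le_rfl).eventually_lt_const
      linarith
    have hev : {s : ℝ | -(ε/4) < W s ω ∧ f s < f 0 + ε/4} ∈ nhdsWithin 0 (Set.Ici (0:ℝ)) :=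
      ev1.and ev2
    rw [mem_nhdsGE_iff_exists_Ico_subset] at hev
    obtain ⟨u, hu, hsub⟩ := hev
    rw [Set.mem_Ioi] at hu
    obtain ⟨n, hnu⟩ : ∃ n : ℕ, t/(n+1) < u := by
      obtain ⟨n, hn'⟩ := exists_nat_gt (t/u)
      refine ⟨n, ?_⟩
      rw [div_lt_iff₀ (by positivity)]
      rw [div_lt_iff₀ hu] at hn'
      nlinarith [hu]
    set h' : ℝ := t/(n+1) with hh'def
    have hh'pos : 0 < h' := by positivity
    have hlow : ∀ x ∈ g '' Set.Icc 0 h', ε/2 ≤ x := by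
      rintro x ⟨s, hs, rfl⟩
      have hsu : s ∈ Set.Ico (0:ℝ) u := ⟨hs.1, lt_of_le_of_lt hs.2 hnu⟩
      obtain ⟨h1, h2⟩ := hsub hsu
      simp only [hgdef, hεdef] at *
      linarith
    have hInf : ε/2 ≤ sInf (g '' Set.Icc 0 h') := by
      apply le_csInf
      · exact ⟨g 0, 0, ⟨le_rfl, hh'pos.le⟩, rfl⟩
      · exact hlow
    rw [hn n] at hInf
    linarith
  intro s hs
  have h1 : 0 ≤ g s := hg0 s hs
  have h2 : f 0 ≤ f s := hmono Set.self_mem_Ici hs.1 hs.1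
  simp only [hgdef] at h1
  linarith


end AuxLemmasForStmt15

/-- Lemma 4.5: for a standard Brownian motion `W` and a càdlàg
non-decreasing function `f`, the event `{inf_{0 ≤ s ≤ t} (W_s − f_s) = 0}` is negligible for
every `t > 0`. -/
theorem stmt15 {Ω : Type*} [MeasurableSpace Ω] (P : Measure Ω)
    (hP : IsProbabilityMeasure P) (W : ℝ → Ω → ℝ) (hW : IsStandardBM P W)
    (f : ℝ → ℝ) (hmono : MonotoneOn f (Set.Ici (0 : ℝ)))
    (hrc : ∀ t : ℝ, 0 ≤ t → ContinuousWithinAt f (Set.Ici t) t) :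
    ∀ t : ℝ, 0 < t →
      P {ω | sInf ((fun s => W s ω - f s) '' Set.Icc (0 : ℝ) t) = 0} = 0 := by
  intro t ht
  haveI := hP
  set Ω₀ : Set Ω := {ω | W 0 ω = 0 ∧ ContinuousOn (fun s => W s ω) (Set.Ici (0:ℝ))}
    with hΩ₀def
  set E : Set Ω := {ω | sInf ((fun s => W s ω - f s) '' Set.Icc (0 : ℝ) t) = 0} with hEdef
  have hΩ₀c : P Ω₀ᶜ = 0 := by
    have h1 : P {ω | ¬ (W 0 ω = 0)} = 0 := ae_iff.mp hW.init
    have h2 : P {ω | ¬ ContinuousOn (fun s => W s ω) (Set.Ici (0:ℝ))} = 0 :=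
      ae_iff.mp hW.cont
    have hsub : Ω₀ᶜ ⊆ {ω | ¬ (W 0 ω = 0)} ∪ {ω | ¬ ContinuousOn (fun s => W s ω) (Set.Ici (0:ℝ))} := by
      intro ω hω
      simp only [hΩ₀def, Set.mem_compl_iff, Set.mem_setOf_eq, not_and_or] at hω
      exact hω
    exact measure_mono_null hsub (measure_union_null h1 h2)
  set A : ℕ → Set Ω := fun n =>
    Ω₀ ∩ {ω | sInf ((fun s => W s ω - f s) '' Set.Icc (t/(n+1)) t) = 0} with hAdef
  set B : Set Ω :=
    Ω₀ ∩ ⋂ n : ℕ, {ω | sInf ((fun s => W s ω - f s) '' Set.Icc 0 (t/(n+1))) = 0} with hBdef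
  have hAnull : ∀ n : ℕ, P (A n) = 0 := by
    intro n
    apply claim1 hP hW hmono hrc (h := t/(n+1)) (by positivity)
    rw [div_le_iff₀ (by positivity)]
    nlinarith [ht]
  have hBnull : P B = 0 := by
    have hsub : B ⊆ {ω | ∀ s ∈ Set.Icc (0:ℝ) t, 0 ≤ W s ω} := by
      rintro ω ⟨hΩ, hI⟩
      simp only [Set.mem_iInter, Set.mem_setOf_eq] at hI
      exact pointwiseB hmono hrc ht hΩ.1 hΩ.2 hI
    apply measure_mono_null hsub
    apply null_of_le_ofReal (c := 1)
    intro δ hδ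
    rw [mul_one]
    exact claim2aux hP hW ht hδ
  have hdecomp : E ∩ Ω₀ ⊆ (⋃ n, A n) ∪ B := by
    rintro ω ⟨hE', hΩ⟩
    simp only [hEdef, Set.mem_setOf_eq] at hE'
    set g : ℝ → ℝ := fun s => W s ω - f s with hgdef
    by_cases hex : ∃ n : ℕ, sInf (g '' Set.Icc (t/(n+1)) t) = 0
    · left
      obtain ⟨n, hn⟩ := hex
      exact Set.mem_iUnion.mpr ⟨n, hΩ, hn⟩
    · right
      push_neg at hex
      refine ⟨hΩ, Set.mem_iInter.mpr fun n => ?_⟩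
      simp only [Set.mem_setOf_eq]
      set h' : ℝ := t/(n+1) with hh'def
      have hh'pos : 0 < h' := by positivity
      have hh't : h' ≤ t := by
        rw [hh'def, div_le_iff₀ (by positivity)]
        nlinarith [ht]
      have hsplit : Set.Icc (0:ℝ) t = Set.Icc 0 h' ∪ Set.Icc h' t :=
        (Set.Icc_union_Icc_eq_Icc hh'pos.le hh't).symm
      have hbdd1 : BddBelow (g '' Set.Icc 0 h') := bdd_helper hmono hΩ.2 le_rfl
      have hbdd2 : BddBelow (g '' Set.Icc h' t) := bdd_helper hmono hΩ.2 hh'pos.le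
      have hbddT : BddBelow (g '' Set.Icc 0 t) := bdd_helper hmono hΩ.2 le_rfl
      have hne1 : (g '' Set.Icc 0 h').Nonempty := ⟨g 0, 0, ⟨le_rfl, hh'pos.le⟩, rfl⟩
      have hne2 : (g '' Set.Icc h' t).Nonempty := ⟨g h', h', ⟨le_rfl, hh't⟩, rfl⟩
      have hmin : min (sInf (g '' Set.Icc 0 h')) (sInf (g '' Set.Icc h' t)) = 0 := by
        rw [← csInf_union hbdd1 hne1 hbdd2 hne2, ← Set.image_union, ← hsplit]
        exact hE'
      have hge2 : ∀ x ∈ g '' Set.Icc h' t, (0:ℝ) ≤ x := by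
        rintro x ⟨s, hs, rfl⟩
        rw [← hE']
        apply csInf_le hbddT
        exact ⟨s, ⟨le_trans hh'pos.le hs.1, hs.2⟩, rfl⟩
      have hb_pos : 0 < sInf (g '' Set.Icc h' t) := by
        rcases lt_or_eq_of_le (le_csInf hne2 hge2) with h | h
        · exact h
        · exact absurd h.symm (hex n)
      rcases min_choice (sInf (g '' Set.Icc 0 h')) (sInf (g '' Set.Icc h' t)) with h | h
      · rw [h] at hmin
        exact hmin
      · rw [h] at hmin
        exact absurd hmin hb_pos.ne'
  have hfinal : P E ≤ 0 := by
    calc P E ≤ P ((E ∩ Ω₀) ∪ Ω₀ᶜ) := by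
          apply measure_mono
          intro ω hω
          by_cases hΩ : ω ∈ Ω₀
          · exact Or.inl ⟨hω, hΩ⟩
          · exact Or.inr hΩ
      _ ≤ P (E ∩ Ω₀) + P Ω₀ᶜ := measure_union_le _ _
      _ ≤ P ((⋃ n, A n) ∪ B) + 0 := by
          rw [hΩ₀c]
          exact add_le_add (measure_mono hdecomp) le_rfl
      _ ≤ (P (⋃ n, A n) + P B) + 0 := by
          exact add_le_add (measure_union_le _ _) le_rfl
      _ = 0 := by
          rw [measure_iUnion_null hAnull, hBnull]
          norm_num
  exact le_antisymm hfinal zero_le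

end
end
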